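/- arXiv:1411.4592 — 8 statements merged into one kernel-verified Lean document; each statement's English description precedes it below -/
import Mathlib

section
/- Let n ≥ 2, let T be an invertible n×n real Toeplitz matrix, and let u = (u₁,…,u_{n+1}) ∈ ℝ^{n+1} with u₁ ≠ 0 and u_{n+1} ≠ 0. Then u lies in the kernel of ∂T if and only if both C_b(u)·T and T·C_l(u) are Toeplitz matrices and C_b(u)·T = T·C_l(u). -/
open Matrix Polynomial

noncomputable section

/-- Top companion matrix of `u`. -/
def Ct (n : ℕ) (u : Fin (n + 1) → ℝ) : Matrix (Fin n) (Fin n) ℝ :=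
  Matrix.of fun i j =>
    if i.val = 0 then -u ⟨n - 1 - j.val, by omega⟩ / u (Fin.last n)
    else if j.val + 1 = i.val then 1 else 0

/-- Bottom companion matrix of `u`. -/
def Cb (n : ℕ) (u : Fin (n + 1) → ℝ) : Matrix (Fin n) (Fin n) ℝ :=
  Matrix.of fun i j =>
    if i.val = n - 1 then -u ⟨n - j.val, by omega⟩ / u 0
    else if j.val = i.val + 1 then 1 else 0

/-- Left companion matrix of `u`. -/
def Cl (n : ℕ) (u : Fin (n + 1) → ℝ) : Matrix (Fin n) (Fin n) ℝ :=
  Matrix.of fun i j =>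
    if j.val = 0 then -u ⟨i.val + 1, by have := i.isLt; omega⟩ / u 0
    else if i.val + 1 = j.val then 1 else 0

/-- Right companion matrix of `u`. -/
def Cr (n : ℕ) (u : Fin (n + 1) → ℝ) : Matrix (Fin n) (Fin n) ℝ :=
  Matrix.of fun i j =>
    if j.val = n - 1 then -u ⟨i.val, by have := i.isLt; omega⟩ / u (Fin.last n)
    else if i.val = j.val + 1 then 1 else 0

/-- A square matrix is Toeplitz if entries depend only on the difference of indices. -/
def IsToeplitz {n : ℕ} (T : Matrix (Fin n) (Fin n) ℝ) : Prop :=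
  ∀ (i j : Fin n) (hi : i.val + 1 < n) (hj : j.val + 1 < n),
    T ⟨i.val + 1, hi⟩ ⟨j.val + 1, hj⟩ = T i j

/-- A square matrix is Hankel if entries depend only on the sum of indices. -/
def IsHankel {n : ℕ} (H : Matrix (Fin n) (Fin n) ℝ) : Prop :=
  ∀ (i j : Fin n) (hi : i.val + 1 < n) (hj : j.val + 1 < n),
    H ⟨i.val + 1, hi⟩ j = H i ⟨j.val + 1, hj⟩

/-- `∂T` for a Toeplitz matrix `T`: the (n-1)×(n+1) matrix with entries `a_{i+1-j}`
(1-based), expressed via the entries of `T`. -/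
def dT {n : ℕ} (T : Matrix (Fin n) (Fin n) ℝ) : Matrix (Fin (n - 1)) (Fin (n + 1)) ℝ :=
  Matrix.of fun i j =>
    if j.val = 0 then
      T ⟨i.val + 1, by have := i.isLt; omega⟩ ⟨0, by have := i.isLt; omega⟩
    else
      T ⟨i.val, by have := i.isLt; omega⟩ ⟨j.val - 1, by have := i.isLt; have := j.isLt; omega⟩

/-- `∂H` for a Hankel matrix `H`: the (n-1)×(n+1) matrix with entries `a_{i+j-n-1}`
(1-based), expressed via the entries of `H`. -/
def dH {n : ℕ} (H : Matrix (Fin n) (Fin n) ℝ) : Matrix (Fin (n - 1)) (Fin (n + 1)) ℝ :=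
  Matrix.of fun i j =>
    if h : j.val < n then H ⟨i.val, by have := i.isLt; omega⟩ ⟨j.val, h⟩
    else H ⟨i.val + 1, by have := i.isLt; omega⟩ ⟨n - 1, by have := i.isLt; omega⟩

/-- The reversed vector `u^J`. -/
def revVec {m : ℕ} (u : Fin m → ℝ) : Fin m → ℝ := fun i => u i.rev

/-- The lower triangular Toeplitz matrix `U₊(u)` with first column `(u₁,…,u_n)ᵀ`. -/
def Uplus (n : ℕ) (u : Fin (n + 1) → ℝ) : Matrix (Fin n) (Fin n) ℝ :=
  Matrix.of fun i j =>
    if j.val ≤ i.val then u ⟨i.val - j.val, by have := i.isLt; omega⟩ else 0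

/-- The upper triangular Toeplitz matrix `U₋(u)` with first row `(u_{n+1},…,u₂)`. -/
def Uminus (n : ℕ) (u : Fin (n + 1) → ℝ) : Matrix (Fin n) (Fin n) ℝ :=
  Matrix.of fun i j =>
    if h : i.val ≤ j.val then u ⟨n + i.val - j.val, by have := j.isLt; omega⟩ else 0

/-- The flip (exchange) matrix `J`. -/
def Jmat (n : ℕ) : Matrix (Fin n) (Fin n) ℝ :=
  Matrix.of fun i j => if j = i.rev then 1 else 0

/-- The Toeplitz Bezoutian `B_T(u,v) = U₊(u)U₋(v) − U₊(v)U₋(u)`. -/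
def BT (n : ℕ) (u v : Fin (n + 1) → ℝ) : Matrix (Fin n) (Fin n) ℝ :=
  Uplus n u * Uminus n v - Uplus n v * Uminus n u

/-- The Hankel Bezoutian `B_H(u,v) = U₊(v)JU₋(u) − U₊(u)JU₋(v)`. -/
def BH (n : ℕ) (u v : Fin (n + 1) → ℝ) : Matrix (Fin n) (Fin n) ℝ :=
  Uplus n v * Jmat n * Uminus n u - Uplus n u * Jmat n * Uminus n v

/-- The polynomial `u(λ) = u₁ + u₂λ + ⋯ + u_{n+1}λⁿ` associated to a vector. -/
def polyOf {m : ℕ} (u : Fin m → ℝ) : Polynomial ℝ :=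
  ∑ i : Fin m, Polynomial.C (u i) * Polynomial.X ^ (i : ℕ)


section Aux
variable {n : ℕ}

lemma toeplitz_shift {T : Matrix (Fin n) (Fin n) ℝ} (hT : IsToeplitz T) :
    ∀ (k p q : ℕ) (hp : p + k < n) (hq : q + k < n),
      T ⟨p + k, hp⟩ ⟨q + k, hq⟩ = T ⟨p, by omega⟩ ⟨q, by omega⟩ := by
  intro k
  induction k with
  | zero => intro p q hp hq; rfl
  | succ k ih =>
    intro p q hp hq
    have h1 : T ⟨p + (k+1), hp⟩ ⟨q + (k+1), hq⟩
        = T ⟨p + k, by omega⟩ ⟨q + k, by omega⟩ :=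
      hT ⟨p + k, by omega⟩ ⟨q + k, by omega⟩ hp hq
    rw [h1, ih]

lemma toeplitz_eq_aux {T : Matrix (Fin n) (Fin n) ℝ} (hT : IsToeplitz T)
    (p q : Fin n) (pv qv : ℕ) (hpv : pv < n) (hqv : qv < n)
    (h : p.val + qv = pv + q.val) (hle : p.val ≤ pv) :
    T p q = T ⟨pv, hpv⟩ ⟨qv, hqv⟩ := by
  obtain ⟨k, hk⟩ : ∃ k, pv = p.val + k := ⟨pv - p.val, by omega⟩
  have hq' : qv = q.val + k := by omega
  subst hk; subst hq'
  rw [toeplitz_shift hT k p.val q.val hpv hqv]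

lemma toeplitz_eq {T : Matrix (Fin n) (Fin n) ℝ} (hT : IsToeplitz T)
    (p q p' q' : Fin n) (h : p.val + q'.val = p'.val + q.val) :
    T p q = T p' q' := by
  rcases le_total p.val p'.val with h1 | h1
  · have := toeplitz_eq_aux hT p q p'.val q'.val p'.isLt q'.isLt h h1
    simpa using this
  · have := toeplitz_eq_aux hT p' q' p.val q.val p.isLt q.isLt h.symm h1
    simpa using this.symm

variable {u : Fin (n + 1) → ℝ} {T : Matrix (Fin n) (Fin n) ℝ}

lemma cb_mul_apply_ne (i j : Fin n) (h : i.val + 1 < n) :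
    (Cb n u * T) i j = T ⟨i.val + 1, h⟩ j := by
  rw [Matrix.mul_apply, Finset.sum_eq_single (⟨i.val + 1, h⟩ : Fin n)]
  · have : Cb n u i ⟨i.val + 1, h⟩ = 1 := by
      simp only [Cb, Matrix.of_apply]
      rw [if_neg (by omega)]
      simp
    rw [this, one_mul]
  · intro b _ hb
    have : Cb n u i b = 0 := by
      simp only [Cb, Matrix.of_apply]
      rw [if_neg (by omega),
        if_neg (fun hc => hb (Fin.ext (show b.val = i.val + 1 from hc)))]
    rw [this, zero_mul]
  · intro hc; exact absurd (Finset.mem_univ _) hc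

lemma cb_mul_apply_last (i j : Fin n) (h : i.val = n - 1) :
    (Cb n u * T) i j
      = ∑ k : Fin n, (-u ⟨n - k.val, by have := k.isLt; omega⟩ / u 0) * T k j := by
  rw [Matrix.mul_apply]
  refine Finset.sum_congr rfl fun k _ => ?_
  simp only [Cb, Matrix.of_apply]
  rw [if_pos h]

lemma cl_mul_apply_ne (i j : Fin n) (h : 0 < j.val) :
    (T * Cl n u) i j = T i ⟨j.val - 1, by have := j.isLt; omega⟩ := by
  rw [Matrix.mul_apply, Finset.sum_eq_single (⟨j.val - 1, by have := j.isLt; omega⟩ : Fin n)]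
  · have : Cl n u ⟨j.val - 1, by have := j.isLt; omega⟩ j = 1 := by
      simp only [Cl, Matrix.of_apply]
      rw [if_neg (by omega), if_pos (show j.val - 1 + 1 = j.val by omega)]
    rw [this, mul_one]
  · intro b _ hb
    have : Cl n u b j = 0 := by
      simp only [Cl, Matrix.of_apply]
      rw [if_neg (by omega),
        if_neg (fun hc => hb (Fin.ext (show b.val = j.val - 1 by omega)))]
    rw [this, mul_zero]
  · intro hc; exact absurd (Finset.mem_univ _) hc

lemma cl_mul_apply_zero (i j : Fin n) (h : j.val = 0) :
    (T * Cl n u) i j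
      = ∑ k : Fin n, T i k * (-u ⟨k.val + 1, by have := k.isLt; omega⟩ / u 0) := by
  rw [Matrix.mul_apply]
  refine Finset.sum_congr rfl fun k _ => ?_
  simp only [Cl, Matrix.of_apply]
  rw [if_pos h]

/-- The row condition expressing `u ∈ ker ∂T`. -/
def Econd (T : Matrix (Fin n) (Fin n) ℝ) (u : Fin (n + 1) → ℝ) : Prop :=
  ∀ (i : ℕ) (hi : i + 1 < n),
    u 0 * T ⟨i + 1, hi⟩ ⟨0, by omega⟩
      + ∑ k : Fin n, u k.succ * T ⟨i, by omega⟩ k = 0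

lemma dT_mulVec_iff :
    (dT T).mulVec u = 0 ↔ Econd T u := by
  have key : ∀ i : Fin (n - 1), (dT T).mulVec u i
      = u 0 * T ⟨i.val + 1, by have := i.isLt; omega⟩ ⟨0, by have := i.isLt; omega⟩
        + ∑ k : Fin n, u k.succ * T ⟨i.val, by have := i.isLt; omega⟩ k := by
    intro i
    rw [Matrix.mulVec, dotProduct, Fin.sum_univ_succ]
    congr 1
    · simp only [dT, Matrix.of_apply]
      rw [if_pos (show ((0 : Fin (n+1)) : ℕ) = 0 from rfl), mul_comm]
    · refine Finset.sum_congr rfl fun k _ => ?_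
      simp only [dT, Matrix.of_apply, Fin.val_succ]
      rw [if_neg (by omega), mul_comm]
      congr 1
  constructor
  · intro h i hi
    have h2 := congrFun h (⟨i, by omega⟩ : Fin (n - 1))
    rw [key ⟨i, by omega⟩] at h2
    simpa using h2
  · intro h
    funext i
    rw [key i]
    simpa using h i.val (by have := i.isLt; omega)

lemma sum_rev {f : Fin n → ℝ} : ∑ k : Fin n, f k = ∑ k : Fin n, f k.rev :=
  Fintype.sum_bijective Fin.rev Fin.rev_bijective f (fun k => f k.rev)
    (fun k => by simp)

lemma keyCl (hE : Econd T u) (i : Fin n) (hi : i.val + 1 < n) (hu1 : u 0 ≠ 0) :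
    ∑ k : Fin n, T i k * (-u ⟨k.val + 1, by have := k.isLt; omega⟩ / u 0)
      = T ⟨i.val + 1, hi⟩ ⟨0, by omega⟩ := by
  have h := hE i.val hi
  have e1 : ∑ k : Fin n, T i k * (-u ⟨k.val + 1, by have := k.isLt; omega⟩ / u 0)
      = -(u 0)⁻¹ * ∑ k : Fin n, u k.succ * T ⟨i.val, i.isLt⟩ k := by
    rw [Finset.mul_sum]
    refine Finset.sum_congr rfl fun k _ => ?_
    have h0 : (⟨i.val, i.isLt⟩ : Fin n) = i := rfl
    have h1 : (⟨k.val + 1, by have := k.isLt; omega⟩ : Fin (n+1)) = k.succ := rfl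
    rw [h0, h1, div_eq_mul_inv]
    ring
  rw [e1]
  have h2 : ∑ k : Fin n, u k.succ * T ⟨i.val, i.isLt⟩ k
      = -(u 0) * T ⟨i.val + 1, hi⟩ ⟨0, by omega⟩ := by linarith
  rw [h2]
  field_simp

lemma keyCb (hE : Econd T u) (hT : IsToeplitz T) (hu1 : u 0 ≠ 0) (hn : 2 ≤ n)
    (j : Fin n) (hj : 1 ≤ j.val) :
    ∑ k : Fin n, (-u ⟨n - k.val, by have := k.isLt; omega⟩ / u 0) * T k j
      = T ⟨n - 1, by omega⟩ ⟨j.val - 1, by have := j.isLt; omega⟩ := by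
  have hjn := j.isLt
  have h := hE (n - 1 - j.val) (by omega)
  have e1 : ∑ k : Fin n, (-u ⟨n - k.val, by have := k.isLt; omega⟩ / u 0) * T k j
      = ∑ k : Fin n, (-u k.succ / u 0) * T ⟨n - 1 - j.val, by omega⟩ k := by
    rw [sum_rev]
    refine Finset.sum_congr rfl fun k _ => ?_
    have hk := k.isLt
    have hv : (k.rev : ℕ) = n - (k.val + 1) := Fin.val_rev k
    have h1 : (⟨n - (k.rev : ℕ), by have := (k.rev).isLt; omega⟩ : Fin (n+1)) = k.succ :=
      Fin.ext (show n - (k.rev : ℕ) = k.val + 1 by rw [hv]; omega)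
    rw [h1]
    congr 1
    exact toeplitz_eq hT k.rev j ⟨n - 1 - j.val, by omega⟩ k
      (show (k.rev : ℕ) + k.val = (n - 1 - j.val) + j.val by rw [hv]; omega)
  rw [e1]
  have e2 : T ⟨n - 1, by omega⟩ ⟨j.val - 1, by have := j.isLt; omega⟩
      = T ⟨n - 1 - j.val + 1, by omega⟩ ⟨0, by omega⟩ :=
    toeplitz_eq hT _ _ _ _
      (show (n - 1) + 0 = (n - 1 - j.val + 1) + (j.val - 1) by omega)
  rw [e2]
  have e3 : ∑ k : Fin n, (-u k.succ / u 0) * T ⟨n - 1 - j.val, by omega⟩ k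
      = -(u 0)⁻¹ * ∑ k : Fin n, u k.succ * T ⟨n - 1 - j.val, by omega⟩ k := by
    rw [Finset.mul_sum]
    refine Finset.sum_congr rfl fun k _ => ?_
    rw [div_eq_mul_inv]; ring
  rw [e3]
  have h2 : ∑ k : Fin n, u k.succ * T ⟨n - 1 - j.val, by omega⟩ k
      = -(u 0) * T ⟨n - 1 - j.val + 1, by omega⟩ ⟨0, by omega⟩ := by linarith
  rw [h2]
  field_simp

end Aux

/-- Theorem (Toeplitz similarity, bottom/left version): for an invertible Toeplitz `T`,
`u ∈ ker ∂T` iff `C_b(u)T` and `TC_l(u)` are Toeplitz and `C_b(u)T = TC_l(u)`. -/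
theorem toeplitz_similarity_bottom_left
    (n : ℕ) (hn : 2 ≤ n) (T : Matrix (Fin n) (Fin n) ℝ)
    (hTinv : IsUnit T.det) (hT : IsToeplitz T)
    (u : Fin (n + 1) → ℝ) (hu1 : u 0 ≠ 0) (hun : u (Fin.last n) ≠ 0) :
    (dT T).mulVec u = 0 ↔
      (IsToeplitz (Cb n u * T) ∧ IsToeplitz (T * Cl n u) ∧
        Cb n u * T = T * Cl n u) := by
  rw [dT_mulVec_iff]
  constructor
  · intro hE
    refine ⟨?_, ?_, ?_⟩
    · -- Cb u * T is Toeplitz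
      intro i j hi hj
      by_cases hc : i.val + 1 = n - 1
      · rw [cb_mul_apply_last ⟨i.val + 1, hi⟩ ⟨j.val + 1, hj⟩ hc,
          cb_mul_apply_ne i j hi,
          keyCb hE hT hu1 hn ⟨j.val + 1, hj⟩ (by simp)]
        exact toeplitz_eq hT _ _ _ _
          (show (n - 1) + j.val = (i.val + 1) + (j.val + 1 - 1) by omega)
      · have hi2 : i.val + 1 + 1 < n := by omega
        rw [cb_mul_apply_ne ⟨i.val + 1, hi⟩ ⟨j.val + 1, hj⟩ hi2,
          cb_mul_apply_ne i j hi]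
        exact toeplitz_eq hT _ _ _ _
          (show (i.val + 1 + 1) + j.val = (i.val + 1) + (j.val + 1) by omega)
    · -- T * Cl u is Toeplitz
      intro i j hi hj
      by_cases hc : j.val = 0
      · rw [cl_mul_apply_ne ⟨i.val + 1, hi⟩ ⟨j.val + 1, hj⟩ (by simp),
          cl_mul_apply_zero i j hc, keyCl hE i hi hu1]
        exact toeplitz_eq hT _ _ _ _
          (show (i.val + 1) + 0 = (i.val + 1) + (j.val + 1 - 1) by omega)
      · rw [cl_mul_apply_ne ⟨i.val + 1, hi⟩ ⟨j.val + 1, hj⟩ (by simp),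
          cl_mul_apply_ne i j (by omega)]
        exact toeplitz_eq hT _ _ _ _
          (show (i.val + 1) + (j.val - 1) = i.val + (j.val + 1 - 1) by omega)
    · -- Cb u * T = T * Cl u
      ext i j
      by_cases hi0 : i.val = n - 1
      · by_cases hj0 : j.val = 0
        · rw [cb_mul_apply_last i j hi0, cl_mul_apply_zero i j hj0, sum_rev]
          refine Finset.sum_congr rfl fun k _ => ?_
          have hk := k.isLt
          have hv : (k.rev : ℕ) = n - (k.val + 1) := Fin.val_rev k
          have h1 : (⟨n - (k.rev : ℕ), by have := (k.rev).isLt; omega⟩ : Fin (n+1))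
              = k.succ := Fin.ext (show n - (k.rev : ℕ) = k.val + 1 by rw [hv]; omega)
          rw [h1]
          have h2 : T k.rev j = T i k := toeplitz_eq hT _ _ _ _
            (show (k.rev : ℕ) + k.val = i.val + j.val by rw [hv]; omega)
          rw [h2]
          have h3 : (⟨k.val + 1, by have := k.isLt; omega⟩ : Fin (n+1)) = k.succ := rfl
          rw [h3]
          ring
        · rw [cb_mul_apply_last i j hi0, cl_mul_apply_ne i j (by omega),
            keyCb hE hT hu1 hn j (by omega)]
          exact toeplitz_eq hT _ _ _ _
            (show (n - 1) + (j.val - 1) = i.val + (j.val - 1) by omega)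
      · by_cases hj0 : j.val = 0
        · rw [cb_mul_apply_ne i j (by omega), cl_mul_apply_zero i j hj0,
            keyCl hE i (by omega) hu1]
          exact toeplitz_eq hT _ _ _ _
            (show (i.val + 1) + 0 = (i.val + 1) + j.val by omega)
        · rw [cb_mul_apply_ne i j (by omega), cl_mul_apply_ne i j (by omega)]
          exact toeplitz_eq hT _ _ _ _
            (show (i.val + 1) + (j.val - 1) = i.val + j.val by omega)
  · rintro ⟨-, -, h3⟩
    intro i hi
    have key := congrFun (congrFun h3 ⟨i, by omega⟩) ⟨0, by omega⟩
    rw [cb_mul_apply_ne ⟨i, by omega⟩ ⟨0, by omega⟩ hi,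
      cl_mul_apply_zero ⟨i, by omega⟩ ⟨0, by omega⟩ rfl] at key
    have e : ∑ k : Fin n, T ⟨i, by omega⟩ k
          * (-u ⟨k.val + 1, by have := k.isLt; omega⟩ / u 0)
        = -(u 0)⁻¹ * ∑ k : Fin n, u k.succ * T ⟨i, by omega⟩ k := by
      rw [Finset.mul_sum]
      refine Finset.sum_congr rfl fun k _ => ?_
      have h3 : (⟨k.val + 1, by have := k.isLt; omega⟩ : Fin (n+1)) = k.succ := rfl
      rw [h3, div_eq_mul_inv]
      ring
    rw [e] at key
    rw [key]
    field_simp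

    ring
end
end

section
/- Let n ≥ 2, let T be an invertible n×n real Toeplitz matrix, and let u = (u₁,…,u_{n+1}) ∈ ℝ^{n+1} with u₁ ≠ 0 and u_{n+1} ≠ 0. If u lies in the kernel of ∂T, then for every integer k (positive, zero, or negative), T⁻¹·C_t(u)^k·T = C_r(u)^k. -/
open Matrix Polynomial

noncomputable section

section AuxSimilarity

/-- Diagonal entries function of a matrix, as a function of the index difference. -/
noncomputable def aEnt (n : ℕ) (T : Matrix (Fin n) (Fin n) ℝ) (d : ℤ) : ℝ :=
  if h : 0 ≤ d then
    (if h2 : d.toNat < n then T ⟨d.toNat, h2⟩ ⟨0, by omega⟩ else 0)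
  else
    (if h2 : (-d).toNat < n then T ⟨0, by omega⟩ ⟨(-d).toNat, h2⟩ else 0)

lemma aEnt_spec1 {n : ℕ} (T : Matrix (Fin n) (Fin n) ℝ) (i j : Fin n) (h : j.val ≤ i.val) :
    aEnt n T ((i.val : ℤ) - j.val) = T ⟨i.val - j.val, by omega⟩ ⟨0, by omega⟩ := by
  have h0 : (0:ℤ) ≤ (i.val:ℤ) - j.val := by omega
  have h1 : ((i.val:ℤ) - j.val).toNat = i.val - j.val := by omega
  have h2 : ((i.val:ℤ) - j.val).toNat < n := by have := i.isLt; omega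
  unfold aEnt
  rw [dif_pos h0, dif_pos h2]
  congr 1
  exact Fin.ext h1

lemma aEnt_spec2 {n : ℕ} (T : Matrix (Fin n) (Fin n) ℝ) (i j : Fin n) (h : i.val < j.val) :
    aEnt n T ((i.val : ℤ) - j.val) = T ⟨0, by omega⟩ ⟨j.val - i.val, by omega⟩ := by
  have h0 : ¬ (0:ℤ) ≤ (i.val:ℤ) - j.val := by omega
  have h1 : (-(((i.val:ℤ)) - j.val)).toNat = j.val - i.val := by omega
  have h2 : (-((i.val:ℤ) - j.val)).toNat < n := by have := j.isLt; omega
  unfold aEnt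
  rw [dif_neg h0, dif_pos h2]
  congr 1
  exact Fin.ext h1

lemma toeplitz_ent {n : ℕ} (T : Matrix (Fin n) (Fin n) ℝ) (hT : IsToeplitz T) :
    ∀ i j : Fin n, T i j = aEnt n T ((i.val : ℤ) - j.val) := by
  suffices h : ∀ m : ℕ, ∀ i j : Fin n, j.val = m → T i j = aEnt n T ((i.val : ℤ) - j.val) by
    exact fun i j => h j.val i j rfl
  intro m
  induction m with
  | zero =>
    intro i j hj
    rw [aEnt_spec1 T i j (by omega)]
    congr 1 <;> exact Fin.ext (by simp only [Fin.val_mk]; omega)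
  | succ m ih =>
    intro i j hj
    rcases Nat.eq_zero_or_pos i.val with hi | hi
    · rw [aEnt_spec2 T i j (by omega)]
      congr 1 <;> exact Fin.ext (by simp only [Fin.val_mk]; omega)
    · have hin := i.isLt; have hjn := j.isLt
      have hrec := hT ⟨i.val - 1, by omega⟩ ⟨j.val - 1, by omega⟩
        (by simp only [Fin.val_mk]; omega) (by simp only [Fin.val_mk]; omega)
      have e1 : (⟨(⟨i.val - 1, by omega⟩ : Fin n).val + 1, by simp only [Fin.val_mk]; omega⟩ : Fin n) = i :=
        Fin.ext (by simp only [Fin.val_mk]; omega)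
      have e2 : (⟨(⟨j.val - 1, by omega⟩ : Fin n).val + 1, by simp only [Fin.val_mk]; omega⟩ : Fin n) = j :=
        Fin.ext (by simp only [Fin.val_mk]; omega)
      rw [e1, e2] at hrec
      rw [hrec, ih ⟨i.val - 1, by omega⟩ ⟨j.val - 1, by omega⟩ (by simp only [Fin.val_mk]; omega)]
      congr 1
      simp only [Fin.val_mk]
      omega

lemma hker_rel {n : ℕ} (T : Matrix (Fin n) (Fin n) ℝ) (hT : IsToeplitz T)
    (u : Fin (n+1) → ℝ) (hker : (dT T).mulVec u = 0) (d : ℕ) (hd1 : 1 ≤ d) (hd2 : d < n) :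
    ∑ j : Fin (n+1), u j * aEnt n T ((d:ℤ) - j.val) = 0 := by
  have h := congrFun hker ⟨d - 1, by omega⟩
  simp only [Matrix.mulVec, dotProduct, Pi.zero_apply] at h
  rw [← h]
  apply Finset.sum_congr rfl
  intro j _
  rw [mul_comm]
  congr 1
  simp only [dT, Matrix.of_apply]
  by_cases hj : j.val = 0
  · rw [if_pos hj, toeplitz_ent T hT]
    congr 1
    simp only [Fin.val_mk]
    omega
  · rw [if_neg hj, toeplitz_ent T hT]
    congr 1
    have := j.isLt
    simp only [Fin.val_mk]
    omega

lemma key_sim {n : ℕ} (hn : 2 ≤ n) (T : Matrix (Fin n) (Fin n) ℝ) (hT : IsToeplitz T)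
    (u : Fin (n + 1) → ℝ) (hu1 : u 0 ≠ 0) (hun : u (Fin.last n) ≠ 0)
    (hker : (dT T).mulVec u = 0) :
    Ct n u * T = T * Cr n u := by
  have hL0 : ∀ i j : Fin n, i.val = 0 → (∑ k, Ct n u i k * T k j)
      = ∑ m : Fin n, (-u (Fin.castSucc m) / u (Fin.last n)) * aEnt n T ((n:ℤ) - 1 - m.val - j.val) := by
    intro i j hi
    rw [← Equiv.sum_comp Fin.revPerm
      (fun m => (-u (Fin.castSucc m) / u (Fin.last n)) * aEnt n T ((n:ℤ) - 1 - m.val - j.val))]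
    apply Finset.sum_congr rfl
    intro k _
    have hkn := k.isLt
    simp only [Ct, Matrix.of_apply, if_pos hi, Fin.revPerm_apply, Fin.val_rev]
    rw [toeplitz_ent T hT]
    congr 2
    · refine congrArg (fun x => -u x) (Fin.ext ?_)
      first
      | omega
      | (simp only [Fin.coe_castSucc, Fin.val_rev, Fin.val_mk]; omega)
    · omega
  have hL1 : ∀ i j : Fin n, ¬ i.val = 0 → (∑ k, Ct n u i k * T k j)
      = aEnt n T ((i.val:ℤ) - 1 - j.val) := by
    intro i j hi
    have hin := i.isLt
    rw [Finset.sum_eq_single (⟨i.val - 1, by omega⟩ : Fin n)]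
    · simp only [Ct, Matrix.of_apply, if_neg hi, Fin.val_mk]
      rw [if_pos (by omega : i.val - 1 + 1 = i.val), one_mul, toeplitz_ent T hT]
      congr 1
      simp only [Fin.val_mk]
      omega
    · intro b _ hb
      have hb' : ¬ (b.val + 1 = i.val) := fun hcon => hb (Fin.ext (by simp only [Fin.val_mk]; omega))
      simp only [Ct, Matrix.of_apply, if_neg hi, if_neg hb', zero_mul]
    · intro h; exact absurd (Finset.mem_univ _) h
  have hR1 : ∀ i j : Fin n, ¬ j.val = n - 1 → (∑ k, T i k * Cr n u k j)
      = aEnt n T ((i.val:ℤ) - j.val - 1) := by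
    intro i j hj
    have hjn := j.isLt
    rw [Finset.sum_eq_single (⟨j.val + 1, by omega⟩ : Fin n)]
    · simp only [Cr, Matrix.of_apply, if_neg hj, Fin.val_mk, if_true]
      rw [mul_one, toeplitz_ent T hT]
      congr 1
      simp only [Fin.val_mk]
      omega
    · intro b _ hb
      have hb' : ¬ (b.val = j.val + 1) := fun hcon => hb (Fin.ext (by simp only [Fin.val_mk]; omega))
      simp only [Cr, Matrix.of_apply, if_neg hj, if_neg hb', mul_zero]
    · intro h; exact absurd (Finset.mem_univ _) h
  have hR2 : ∀ i j : Fin n, j.val = n - 1 → (∑ k, T i k * Cr n u k j)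
      = ∑ k : Fin n, aEnt n T ((i.val:ℤ) - k.val) * (-u (Fin.castSucc k) / u (Fin.last n)) := by
    intro i j hj
    apply Finset.sum_congr rfl
    intro k _
    rw [toeplitz_ent T hT]
    congr 1
    simp only [Cr, Matrix.of_apply, if_pos hj]
    congr 2
    all_goals exact Fin.ext (by simp only [Fin.coe_castSucc, Fin.val_mk])
  ext i j
  rw [Matrix.mul_apply, Matrix.mul_apply]
  have hin := i.isLt; have hjn := j.isLt
  by_cases hi : i.val = 0 <;> by_cases hj : j.val = n - 1
  · -- i = 0, j = n-1
    rw [hL0 i j hi, hR2 i j hj]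
    apply Finset.sum_congr rfl
    intro m _
    have hmn := m.isLt
    rw [show ((n:ℤ) - 1 - m.val - j.val) = ((i.val:ℤ) - m.val) by omega]
    ring
  · -- i = 0, j < n-1
    rw [hL0 i j hi, hR1 i j hj]
    have hrel := hker_rel T hT u hker (n - 1 - j.val) (by omega) (by omega)
    rw [Fin.sum_univ_castSucc] at hrel
    simp only [Fin.coe_castSucc, Fin.val_last] at hrel
    simp only [show ∀ m : Fin n, ((n:ℤ) - 1 - m.val - j.val) = (((n - 1 - j.val : ℕ) : ℤ) - m.val)
      from fun m => by have := m.isLt; omega]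
    rw [show ((i.val:ℤ) - j.val - 1) = (((n - 1 - j.val : ℕ) : ℤ) - (n:ℕ)) by omega]
    have hstep : (∑ m : Fin n, (-u (Fin.castSucc m) / u (Fin.last n)) * aEnt n T (((n - 1 - j.val : ℕ) : ℤ) - m.val))
        = (∑ m : Fin n, u (Fin.castSucc m) * aEnt n T (((n - 1 - j.val : ℕ) : ℤ) - m.val)) * (-1 / u (Fin.last n)) := by
      rw [Finset.sum_mul]
      apply Finset.sum_congr rfl
      intro m _
      ring
    rw [hstep]
    have hS : (∑ m : Fin n, u (Fin.castSucc m) * aEnt n T (((n - 1 - j.val : ℕ) : ℤ) - m.val))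
        = -(u (Fin.last n) * aEnt n T (((n - 1 - j.val : ℕ) : ℤ) - (n:ℕ))) := by linarith
    rw [hS]
    field_simp
  · -- i ≥ 1, j = n-1
    rw [hL1 i j hi, hR2 i j hj]
    have hrel := hker_rel T hT u hker i.val (by omega) (by omega)
    rw [Fin.sum_univ_castSucc] at hrel
    simp only [Fin.coe_castSucc, Fin.val_last] at hrel
    rw [show ((i.val:ℤ) - 1 - j.val) = ((i.val:ℤ) - (n:ℕ)) by omega]
    have hstep : (∑ k : Fin n, aEnt n T ((i.val:ℤ) - k.val) * (-u (Fin.castSucc k) / u (Fin.last n)))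
        = (∑ m : Fin n, u (Fin.castSucc m) * aEnt n T ((i.val:ℤ) - m.val)) * (-1 / u (Fin.last n)) := by
      rw [Finset.sum_mul]
      apply Finset.sum_congr rfl
      intro m _
      ring
    rw [hstep]
    have hS : (∑ m : Fin n, u (Fin.castSucc m) * aEnt n T ((i.val:ℤ) - m.val))
        = -(u (Fin.last n) * aEnt n T ((i.val:ℤ) - (n:ℕ))) := by linarith
    rw [hS]
    field_simp
  · -- i ≥ 1, j < n-1
    rw [hL1 i j hi, hR1 i j hj]
    congr 1
    ring

end AuxSimilarity

lemma Ct_isUnit {n : ℕ} (hn : 2 ≤ n) (u : Fin (n+1) → ℝ) (hu1 : u 0 ≠ 0)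
    (hun : u (Fin.last n) ≠ 0) : IsUnit (Ct n u) := by
  rw [Matrix.isUnit_iff_isUnit_det, isUnit_iff_ne_zero]
  intro h0
  obtain ⟨v, hv0, hv⟩ := (Matrix.exists_mulVec_eq_zero_iff).mpr h0
  have hlow : ∀ j : Fin n, j.val < n - 1 → v j = 0 := by
    intro j hjlt
    have hjn := j.isLt
    have h := congrFun hv ⟨j.val + 1, by omega⟩
    simp only [Matrix.mulVec, dotProduct, Pi.zero_apply] at h
    rw [Finset.sum_eq_single j] at h
    · have e1 : Ct n u ⟨j.val + 1, by omega⟩ j = 1 := by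
        simp only [Ct, Matrix.of_apply, Fin.val_mk]
        rw [if_neg (by omega)]
        simp
      rw [e1, one_mul] at h
      exact h
    · intro b _ hb
      have hb' : ¬ (b.val + 1 = j.val + 1) := fun hc => hb (Fin.ext (by omega))
      simp only [Ct, Matrix.of_apply, Fin.val_mk]
      rw [if_neg (by omega), if_neg hb', zero_mul]
    · intro hmem; exact absurd (Finset.mem_univ _) hmem
  have hlast : v ⟨n - 1, by omega⟩ = 0 := by
    have h := congrFun hv ⟨0, by omega⟩
    simp only [Matrix.mulVec, dotProduct, Pi.zero_apply] at h
    rw [Finset.sum_eq_single (⟨n - 1, by omega⟩ : Fin n)] at h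
    · have e1 : Ct n u ⟨0, by omega⟩ ⟨n - 1, by omega⟩ = -u 0 / u (Fin.last n) := by
        simp only [Ct, Matrix.of_apply, Fin.val_mk]
        simp only [if_true]
        exact congrArg (fun x => -u x / u (Fin.last n))
          (Fin.ext (by simp only [Fin.val_mk, Fin.val_zero]; omega))
      rw [e1] at h
      rcases mul_eq_zero.mp h with h' | h'
      · exact absurd h' (div_ne_zero (neg_ne_zero.mpr hu1) hun)
      · exact h'
    · intro b _ hb
      have hbn := b.isLt
      have : b.val < n - 1 := by
        rcases Nat.lt_or_ge b.val (n-1) with h' | h'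
        · exact h'
        · exact absurd (Fin.ext (show b.val = n - 1 by omega)) hb
      rw [hlow b this, mul_zero]
    · intro hmem; exact absurd (Finset.mem_univ _) hmem
  apply hv0
  funext j
  have hjn := j.isLt
  by_cases hj : j.val = n - 1
  · have : j = ⟨n - 1, by omega⟩ := Fin.ext hj
    rw [this]; exact hlast
  · exact hlow j (by omega)

/-- If `u ∈ ker ∂T` for an invertible Toeplitz `T`, then `T⁻¹ C_t(u)^k T = C_r(u)^k`
for every integer `k`. -/
theorem toeplitz_similarity_all_powers
    (n : ℕ) (hn : 2 ≤ n) (T : Matrix (Fin n) (Fin n) ℝ)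
    (hTinv : IsUnit T.det) (hT : IsToeplitz T)
    (u : Fin (n + 1) → ℝ) (hu1 : u 0 ≠ 0) (hun : u (Fin.last n) ≠ 0)
    (hker : (dT T).mulVec u = 0) :
    ∀ k : ℤ, T⁻¹ * Ct n u ^ k * T = Cr n u ^ k := by
  intro k
  have key := key_sim hn T hT u hu1 hun hker
  have hTu : IsUnit T := (Matrix.isUnit_iff_isUnit_det T).mpr hTinv
  have hCtu : IsUnit (Ct n u) := Ct_isUnit hn u hu1 hun
  obtain ⟨tT, htT⟩ := hTu
  obtain ⟨tC, htC⟩ := hCtu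
  have hTi : T⁻¹ = ↑tT⁻¹ := by rw [← htT]; exact (Matrix.coe_units_inv tT).symm
  have hCr : Cr n u = ↑(tT⁻¹ * tC * tT) := by
    rw [Units.val_mul, Units.val_mul, htC, htT, ← hTi, Matrix.mul_assoc, key,
      ← Matrix.mul_assoc, Matrix.nonsing_inv_mul T hTinv, Matrix.one_mul]
  rw [hTi, ← htC, hCr, ← Matrix.coe_units_zpow, ← Matrix.coe_units_zpow]
  rw [show (tT⁻¹ * tC * tT) ^ k = tT⁻¹ * tC ^ k * tT from by
    have h := conj_zpow (i := k) (a := tT⁻¹) (b := tC)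
    rwa [inv_inv] at h]
  rw [Units.val_mul, Units.val_mul, htT]
end
end

section
/- Let n ≥ 2, let H be an invertible n×n real Hankel matrix, and let u = (u₁,…,u_{n+1}) ∈ ℝ^{n+1} with u₁ ≠ 0 and u_{n+1} ≠ 0. Then the reversed vector u^J lies in the kernel of ∂H if and only if both C_t(u)·H and H·C_l(u^J) are Hankel matrices and C_t(u)·H = H·C_l(u^J). -/
open Matrix Polynomial

noncomputable section

section AuxLemmas

lemma hankel_shift {n : ℕ} {H : Matrix (Fin n) (Fin n) ℝ} (hH : IsHankel H) (d : ℕ) :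
    ∀ (i j : ℕ) (hi : i + d < n) (hj : j < n) (hd : d ≤ j),
      H ⟨i + d, hi⟩ ⟨j - d, by omega⟩ = H ⟨i, by omega⟩ ⟨j, hj⟩ := by
  induction d with
  | zero => intro i j hi hj hd; simp
  | succ d ih =>
    intro i j hi hj hd
    have h1 := hH ⟨i + d, by omega⟩ ⟨j - d - 1, by omega⟩
      (by simp only [Fin.val_mk]; omega) (by simp only [Fin.val_mk]; omega)
    have step : H ⟨i + (d + 1), hi⟩ ⟨j - (d + 1), by omega⟩
        = H ⟨i + d, by omega⟩ ⟨j - d, by omega⟩ := by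
      convert h1 using 2 <;> exact Fin.ext (by simp only [Fin.val_mk]; omega)
    rw [step]; exact ih i j (by omega) hj (by omega)

lemma hankel_const {n : ℕ} {H : Matrix (Fin n) (Fin n) ℝ} (hH : IsHankel H)
    (i j i' j' : Fin n) (h : i.val + j.val = i'.val + j'.val) : H i j = H i' j' := by
  rcases le_total i.val i'.val with hle | hle
  · have hs := hankel_shift hH (i'.val - i.val) i.val j.val (by omega) j.isLt (by omega)
    have hs' : H i' j' = H i j := by
      convert hs using 2 <;> exact Fin.ext (by simp only [Fin.val_mk]; omega)
    exact hs'.symm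
  · have hs := hankel_shift hH (i.val - i'.val) i'.val j'.val (by omega) j'.isLt (by omega)
    have hs' : H i j = H i' j' := by
      convert hs using 2 <;> exact Fin.ext (by simp only [Fin.val_mk]; omega)
    exact hs'

/-- Diagonal entry function of a Hankel matrix. -/
def Ediag {n : ℕ} (H : Matrix (Fin n) (Fin n) ℝ) (d : ℕ) : ℝ :=
  if h : 0 < n ∧ d < 2 * n - 1 then
    H ⟨min d (n - 1), by omega⟩ ⟨d - min d (n - 1), by omega⟩ else 0

lemma Ediag_eq {n : ℕ} {H : Matrix (Fin n) (Fin n) ℝ} (hH : IsHankel H) (i j : Fin n) :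
    H i j = Ediag H (i.val + j.val) := by
  have hi := i.isLt; have hj := j.isLt
  rw [Ediag, dif_pos ⟨by omega, by omega⟩]
  exact hankel_const hH i j _ _ (by simp only [Fin.val_mk]; omega)

lemma dH_apply {n : ℕ} {H : Matrix (Fin n) (Fin n) ℝ} (hH : IsHankel H)
    (i : Fin (n - 1)) (j : Fin (n + 1)) :
    dH H i j = Ediag H (i.val + j.val) := by
  have hi := i.isLt; have hj := j.isLt
  rw [dH, Matrix.of_apply]
  split
  · rw [Ediag_eq hH]
  · rw [Ediag_eq hH]; congr 1; simp only [Fin.val_mk]; omega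

lemma CtH_row0 {n : ℕ} (u : Fin (n + 1) → ℝ) (H : Matrix (Fin n) (Fin n) ℝ)
    (i j : Fin n) (hi : i.val = 0) :
    (Ct n u * H) i j
      = ∑ k : Fin n, -u ⟨n - 1 - k.val, by omega⟩ / u (Fin.last n) * H k j := by
  rw [Matrix.mul_apply]
  refine Finset.sum_congr rfl fun k _ => ?_
  rw [Ct, Matrix.of_apply, if_pos hi]

lemma CtH_row1 {n : ℕ} (u : Fin (n + 1) → ℝ) (H : Matrix (Fin n) (Fin n) ℝ)
    (i j : Fin n) (hi : i.val ≠ 0) :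
    (Ct n u * H) i j = H ⟨i.val - 1, by have := i.isLt; omega⟩ j := by
  rw [Matrix.mul_apply]
  rw [Finset.sum_eq_single (⟨i.val - 1, by have := i.isLt; omega⟩ : Fin n)]
  · rw [Ct, Matrix.of_apply, if_neg hi, if_pos (by simp only [Fin.val_mk]; omega), one_mul]
  · intro b _ hb
    rw [Ct, Matrix.of_apply, if_neg hi, if_neg, zero_mul]
    intro hc; exact hb (Fin.ext (by simp only [Fin.val_mk]; omega))
  · intro h; exact absurd (Finset.mem_univ _) h

lemma HCl_col0 {n : ℕ} (v : Fin (n + 1) → ℝ) (H : Matrix (Fin n) (Fin n) ℝ)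
    (i j : Fin n) (hj : j.val = 0) :
    (H * Cl n v) i j
      = ∑ k : Fin n, H i k * (-v ⟨k.val + 1, by have := k.isLt; omega⟩ / v 0) := by
  rw [Matrix.mul_apply]
  refine Finset.sum_congr rfl fun k _ => ?_
  rw [Cl, Matrix.of_apply, if_pos hj]

lemma HCl_col1 {n : ℕ} (v : Fin (n + 1) → ℝ) (H : Matrix (Fin n) (Fin n) ℝ)
    (i j : Fin n) (hj : j.val ≠ 0) :
    (H * Cl n v) i j = H i ⟨j.val - 1, by have := j.isLt; omega⟩ := by
  rw [Matrix.mul_apply]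
  rw [Finset.sum_eq_single (⟨j.val - 1, by have := j.isLt; omega⟩ : Fin n)]
  · rw [Cl, Matrix.of_apply, if_neg hj, if_pos (by simp only [Fin.val_mk]; omega), mul_one]
  · intro b _ hb
    rw [Cl, Matrix.of_apply, if_neg hj, if_neg, mul_zero]
    intro hc; exact hb (Fin.ext (by simp only [Fin.val_mk]; omega))
  · intro h; exact absurd (Finset.mem_univ _) h

end AuxLemmas

/-- Corollary (Hankel similarity, top/left version): for an invertible Hankel `H`,
`u^J ∈ ker ∂H` iff `C_t(u)H` and `HC_l(u^J)` are Hankel and `C_t(u)H = HC_l(u^J)`. -/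
theorem hankel_similarity_top_left
    (n : ℕ) (hn : 2 ≤ n) (H : Matrix (Fin n) (Fin n) ℝ)
    (hHinv : IsUnit H.det) (hH : IsHankel H)
    (u : Fin (n + 1) → ℝ) (hu1 : u 0 ≠ 0) (hun : u (Fin.last n) ≠ 0) :
    (dH H).mulVec (revVec u) = 0 ↔
      (IsHankel (Ct n u * H) ∧ IsHankel (H * Cl n (revVec u)) ∧
        Ct n u * H = H * Cl n (revVec u)) := by
  have hn1 : 1 ≤ n := by omega
  -- abbreviations
  have hE : ∀ i j : Fin n, H i j = Ediag H (i.val + j.val) := Ediag_eq hH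
  set E : ℕ → ℝ := Ediag H with hEdef
  have hEc : ∀ a b : ℕ, a = b → E a = E b := fun a b h => by rw [h]
  set Q : ℕ → ℝ :=
    fun m => ∑ k : Fin n, u ⟨n - 1 - k.val, by omega⟩ * E (m + k.val) with hQdef
  set v : Fin (n + 1) → ℝ := revVec u with hvdef
  have hv0 : v 0 = u (Fin.last n) := by
    show u (Fin.rev 0) = u (Fin.last n)
    congr 1
  have hvk : ∀ (k : ℕ) (hk : k + 1 < n + 1),
      v ⟨k + 1, hk⟩ = u ⟨n - 1 - k, by omega⟩ := by
    intro k hk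
    show u (Fin.rev _) = _
    congr 1
    exact Fin.ext (by rw [Fin.val_rev]; simp only [Fin.val_mk]; omega)
  have hrev : ∀ j : Fin (n + 1), revVec u j = u ⟨n - j.val, by omega⟩ := by
    intro j
    show u j.rev = _
    congr 1
    exact Fin.ext (by rw [Fin.val_rev]; simp only [Fin.val_mk]; omega)
  -- kernel components
  have hcomp : ∀ i : Fin (n - 1),
      (dH H).mulVec (revVec u) i = u (Fin.last n) * E i.val + Q (i.val + 1) := by
    intro i
    have h1 : (dH H).mulVec (revVec u) i
        = ∑ j : Fin (n + 1), E (i.val + j.val) * u ⟨n - j.val, by omega⟩ := by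
      simp only [Matrix.mulVec, dotProduct]
      refine Finset.sum_congr rfl fun j _ => ?_
      rw [dH_apply hH i j, hrev j]
    rw [h1, Fin.sum_univ_succ]
    congr 1
    · simp only [Fin.val_zero, Nat.sub_zero, Nat.add_zero]
      rw [mul_comm]
      rfl
    · rw [hQdef]
      refine Finset.sum_congr rfl fun k _ => ?_
      rw [mul_comm]
      congr 1
      · congr 1
        exact Fin.ext (by simp only [Fin.val_mk, Fin.val_succ]; omega)
      · exact hEc _ _ (by simp only [Fin.val_succ]; omega)
  have hker : (dH H).mulVec (revVec u) = 0 ↔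
      ∀ m : ℕ, m + 1 < n → u (Fin.last n) * E m + Q (m + 1) = 0 := by
    constructor
    · intro h m hm
      have h2 := hcomp ⟨m, by omega⟩
      rw [h, Pi.zero_apply] at h2
      simp only [Fin.val_mk] at h2
      exact h2.symm
    · intro h
      funext i
      rw [Pi.zero_apply, hcomp i]
      exact h i.val (by have := i.isLt; omega)
  -- entry formulas
  have hM1a : ∀ (i j : Fin n), i.val ≠ 0 → (Ct n u * H) i j = E (i.val - 1 + j.val) := by
    intro i j hi
    rw [CtH_row1 u H i j hi, hE]
  have hM1b : ∀ (i j : Fin n), i.val = 0 →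
      (Ct n u * H) i j = -Q j.val / u (Fin.last n) := by
    intro i j hi
    rw [CtH_row0 u H i j hi, hQdef]
    have hHE : ∀ k : Fin n, H k j = E (j.val + k.val) := fun k => by
      rw [hE]; exact hEc _ _ (by omega)
    simp only [hHE]
    rw [eq_div_iff hun, Finset.sum_mul, ← Finset.sum_neg_distrib]
    refine Finset.sum_congr rfl fun k _ => ?_
    field_simp
  have hM2a : ∀ (i j : Fin n), j.val ≠ 0 →
      (H * Cl n v) i j = E (i.val + (j.val - 1)) := by
    intro i j hj
    rw [HCl_col1 v H i j hj, hE]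
  have hM2b : ∀ (i j : Fin n), j.val = 0 →
      (H * Cl n v) i j = -Q i.val / u (Fin.last n) := by
    intro i j hj
    rw [HCl_col0 v H i j hj, hQdef]
    have hHE : ∀ k : Fin n, H i k = E (i.val + k.val) := fun k => hE i k
    have hvv : ∀ k : Fin n, v ⟨k.val + 1, by omega⟩ = u ⟨n - 1 - k.val, by omega⟩ :=
      fun k => hvk k.val (by omega)
    simp only [hHE, hvv, hv0]
    rw [eq_div_iff hun, Finset.sum_mul, ← Finset.sum_neg_distrib]
    refine Finset.sum_congr rfl fun k _ => ?_
    rw [mul_comm (E (i.val + k.val)), div_mul_eq_mul_div, div_mul_eq_mul_div,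
      div_eq_iff hun]
    ring
  rw [hker]
  constructor
  · intro hK
    have hQn : ∀ m : ℕ, m + 1 < n → -Q (m + 1) / u (Fin.last n) = E m := by
      intro m hm
      rw [div_eq_iff hun]
      linarith [hK m hm]
    refine ⟨?_, ?_, ?_⟩
    · intro i j hi hj
      by_cases h0 : i.val = 0
      · rw [hM1a ⟨i.val + 1, hi⟩ j (by simp only [Fin.val_mk]; omega),
          hM1b i ⟨j.val + 1, hj⟩ h0]
        have : -Q ((⟨j.val + 1, hj⟩ : Fin n)).val / u (Fin.last n) = E j.val := by
          simp only [Fin.val_mk]; exact hQn j.val (by omega)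
        rw [this]
        exact hEc _ _ (by simp only [Fin.val_mk]; omega)
      · rw [hM1a ⟨i.val + 1, hi⟩ j (by simp only [Fin.val_mk]; omega),
          hM1a i ⟨j.val + 1, hj⟩ h0]
        exact hEc _ _ (by simp only [Fin.val_mk]; omega)
    · intro i j hi hj
      by_cases h0 : j.val = 0
      · rw [hM2b ⟨i.val + 1, hi⟩ j h0,
          hM2a i ⟨j.val + 1, hj⟩ (by simp only [Fin.val_mk]; omega)]
        have : -Q ((⟨i.val + 1, hi⟩ : Fin n)).val / u (Fin.last n) = E i.val := by
          simp only [Fin.val_mk]; exact hQn i.val (by omega)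
        rw [this]
        exact hEc _ _ (by simp only [Fin.val_mk]; omega)
      · rw [hM2a ⟨i.val + 1, hi⟩ j h0,
          hM2a i ⟨j.val + 1, hj⟩ (by simp only [Fin.val_mk]; omega)]
        exact hEc _ _ (by simp only [Fin.val_mk]; omega)
    · ext i j
      by_cases hi0 : i.val = 0 <;> by_cases hj0 : j.val = 0
      · rw [hM1b i j hi0, hM2b i j hj0, hi0, hj0]
      · have hq := hQn (j.val - 1) (by have := j.isLt; omega)
        rw [show j.val - 1 + 1 = j.val from by omega] at hq
        rw [hM1b i j hi0, hM2a i j hj0, hq]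
        exact (hEc _ _ (by omega)).symm
      · have hq := hQn (i.val - 1) (by have := i.isLt; omega)
        rw [show i.val - 1 + 1 = i.val from by omega] at hq
        rw [hM1a i j hi0, hM2b i j hj0, hq]
        exact hEc _ _ (by omega)
      · rw [hM1a i j hi0, hM2a i j hj0]
        exact hEc _ _ (by have := i.isLt; have := j.isLt; omega)
  · rintro ⟨-, -, heq⟩
    intro m hm
    have h1 := congrFun (congrFun heq ⟨m + 1, by omega⟩) ⟨0, by omega⟩
    rw [hM1a ⟨m + 1, by omega⟩ ⟨0, by omega⟩ (by simp only [Fin.val_mk]; omega),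
      hM2b ⟨m + 1, by omega⟩ ⟨0, by omega⟩ (by simp only [Fin.val_mk])] at h1
    have h2 : E m = -Q (m + 1) / u (Fin.last n) := by
      rw [← h1]
      exact (hEc _ _ (by simp only [Fin.val_mk]; omega)).symm
    rw [eq_div_iff hun] at h2
    linarith
end
end

section
/- Let n ≥ 2, let H be an invertible n×n real Hankel matrix, and let u = (u₁,…,u_{n+1}) ∈ ℝ^{n+1} with u₁ ≠ 0 and u_{n+1} ≠ 0. Then the reversed vector u^J lies in the kernel of ∂H if and only if both C_b(u)·H and H·C_r(u^J) are Hankel matrices and C_b(u)·H = H·C_r(u^J). -/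
open Matrix Polynomial

noncomputable section

section HankelAux

variable {n : ℕ}

private lemma hank_shift (H : Matrix (Fin n) (Fin n) ℝ) (hH : IsHankel H) (d : ℕ) :
    ∀ (p q : ℕ) (hp : p + d < n) (hq : q < n) (hp' : p < n) (hq' : q + d < n),
    H ⟨p + d, hp⟩ ⟨q, hq⟩ = H ⟨p, hp'⟩ ⟨q + d, hq'⟩ := by
  have hH' : ∀ (p q : ℕ) (hp : p + 1 < n) (hq : q + 1 < n) (hp0 : p < n) (hq0 : q < n),
      H ⟨p + 1, hp⟩ ⟨q, hq0⟩ = H ⟨p, hp0⟩ ⟨q + 1, hq⟩ :=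
    fun p q hp hq hp0 hq0 => hH ⟨p, hp0⟩ ⟨q, hq0⟩ hp hq
  induction d with
  | zero => intro p q hp hq hp' hq'; rfl
  | succ d ih =>
    intro p q hp hq hp' hq'
    have h1 : H ⟨p + d + 1, by omega⟩ ⟨q, hq⟩ = H ⟨p + d, by omega⟩ ⟨q + 1, by omega⟩ :=
      hH' (p + d) q (by omega) (by omega) (by omega) hq
    have h2 := ih p (q + 1) (by omega) (by omega) hp' (by omega)
    have h3 : (⟨q + 1 + d, by omega⟩ : Fin n) = ⟨q + (d + 1), hq'⟩ :=
      Fin.mk_eq_mk.mpr (by omega)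
    exact h1.trans (h2.trans (congrArg (H ⟨p, hp'⟩) h3))

private lemma hank_gen (H : Matrix (Fin n) (Fin n) ℝ) (hH : IsHankel H)
    (p q p' q' : ℕ) (hp : p < n) (hq : q < n) (hp' : p' < n) (hq' : q' < n)
    (hsum : p + q = p' + q') : H ⟨p, hp⟩ ⟨q, hq⟩ = H ⟨p', hp'⟩ ⟨q', hq'⟩ := by
  rcases le_total p p' with h | h
  · have := hank_shift H hH (p' - p) p q' (by omega) hq' hp (by omega)
    have e1 : (⟨p + (p' - p), by omega⟩ : Fin n) = ⟨p', hp'⟩ := Fin.mk_eq_mk.mpr (by omega)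
    have e2 : (⟨q' + (p' - p), by omega⟩ : Fin n) = ⟨q, hq⟩ := Fin.mk_eq_mk.mpr (by omega)
    rw [e1, e2] at this
    exact this.symm
  · have := hank_shift H hH (p - p') p' q (by omega) hq hp' (by omega)
    have e1 : (⟨p' + (p - p'), by omega⟩ : Fin n) = ⟨p, hp⟩ := Fin.mk_eq_mk.mpr (by omega)
    have e2 : (⟨q + (p - p'), by omega⟩ : Fin n) = ⟨q', hq'⟩ := Fin.mk_eq_mk.mpr (by omega)
    rw [e1, e2] at this
    exact this

private lemma Cb_mul_apply_top (u : Fin (n + 1) → ℝ) (H : Matrix (Fin n) (Fin n) ℝ)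
    (i j : Fin n) (hi : i.val < n - 1) :
    (Cb n u * H) i j = H ⟨i.val + 1, by omega⟩ j := by
  rw [Matrix.mul_apply]
  rw [Fintype.sum_eq_single (⟨i.val + 1, by omega⟩ : Fin n)]
  · have : Cb n u i ⟨i.val + 1, by omega⟩ = 1 := by
      simp only [Cb, Matrix.of_apply]
      rw [if_neg (by omega)]
      simp
    rw [this, one_mul]
  · intro b hb
    have hb' : b.val ≠ i.val + 1 := fun h => hb (Fin.ext h)
    have : Cb n u i b = 0 := by
      simp only [Cb, Matrix.of_apply]
      rw [if_neg (by omega), if_neg hb']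
    rw [this, zero_mul]

private lemma Cb_mul_apply_bot (u : Fin (n + 1) → ℝ) (H : Matrix (Fin n) (Fin n) ℝ)
    (i j : Fin n) (hi : i.val = n - 1) (hn : 2 ≤ n) :
    (Cb n u * H) i j = ∑ k : Fin n, (-u ⟨n - k.val, by omega⟩ / u 0) * H k j := by
  rw [Matrix.mul_apply]
  refine Finset.sum_congr rfl fun k _ => ?_
  simp only [Cb, Matrix.of_apply]
  rw [if_pos hi]

private lemma mul_Cr_apply_left (v : Fin (n + 1) → ℝ) (H : Matrix (Fin n) (Fin n) ℝ)
    (i j : Fin n) (hj : j.val < n - 1) :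
    (H * Cr n v) i j = H i ⟨j.val + 1, by omega⟩ := by
  rw [Matrix.mul_apply]
  rw [Fintype.sum_eq_single (⟨j.val + 1, by omega⟩ : Fin n)]
  · have : Cr n v ⟨j.val + 1, by omega⟩ j = 1 := by
      simp only [Cr, Matrix.of_apply]
      rw [if_neg (by omega)]
      simp
    rw [this, mul_one]
  · intro b hb
    have hb' : b.val ≠ j.val + 1 := fun h => hb (Fin.ext h)
    have : Cr n v b j = 0 := by
      simp only [Cr, Matrix.of_apply]
      rw [if_neg (by omega), if_neg hb']
    rw [this, mul_zero]

private lemma mul_Cr_apply_last (v : Fin (n + 1) → ℝ) (H : Matrix (Fin n) (Fin n) ℝ)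
    (i j : Fin n) (hj : j.val = n - 1) (hn : 2 ≤ n) :
    (H * Cr n v) i j
      = ∑ k : Fin n, H i k * (-v ⟨k.val, by omega⟩ / v (Fin.last n)) := by
  rw [Matrix.mul_apply]
  refine Finset.sum_congr rfl fun k _ => ?_
  simp only [Cr, Matrix.of_apply]
  rw [if_pos hj]

private lemma revVec_mk (u : Fin (n + 1) → ℝ) (k : ℕ) (hk : k < n + 1) :
    revVec u ⟨k, hk⟩ = u ⟨n - k, by omega⟩ := by
  simp only [revVec]
  congr 1
  exact Fin.ext (by simp only [Fin.val_rev]; omega)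

private lemma revVec_last (u : Fin (n + 1) → ℝ) :
    revVec u (Fin.last n) = u 0 := by
  simp [revVec, Fin.rev_last]

private lemma key_identity (hn : 2 ≤ n) (H : Matrix (Fin n) (Fin n) ℝ)
    (u : Fin (n + 1) → ℝ) (hu1 : u 0 ≠ 0) (i : Fin (n - 1)) :
    (dH H).mulVec (revVec u) i
      = u 0 * ((Cb n u * H) ⟨i.val, by omega⟩ ⟨n - 1, by omega⟩
          - (H * Cr n (revVec u)) ⟨i.val, by omega⟩ ⟨n - 1, by omega⟩) := by
  have hiv := i.isLt
  rw [Matrix.mulVec, dotProduct, Fin.sum_univ_castSucc]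
  have hlast : dH H i (Fin.last n) = H ⟨i.val + 1, by omega⟩ ⟨n - 1, by omega⟩ := by
    simp only [dH, Matrix.of_apply, Fin.val_last]
    rw [dif_neg (by omega)]
  have hcast : ∀ k : Fin n, dH H i (Fin.castSucc k) = H ⟨i.val, by omega⟩ k := by
    intro k
    simp only [dH, Matrix.of_apply, Fin.coe_castSucc]
    rw [dif_pos k.isLt]
  rw [hlast]
  have hsum : ∀ k : Fin n,
      dH H i (Fin.castSucc k) * revVec u (Fin.castSucc k)
        = H ⟨i.val, by omega⟩ k * u ⟨n - k.val, by omega⟩ := by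
    intro k
    rw [hcast k]
    congr 1
    have : Fin.castSucc k = (⟨k.val, by omega⟩ : Fin (n + 1)) := rfl
    rw [this, revVec_mk]
  rw [Finset.sum_congr rfl (fun k _ => hsum k)]
  rw [Cb_mul_apply_top u H ⟨i.val, by omega⟩ ⟨n - 1, by omega⟩ (by exact (show i.val < n - 1 by omega))]
  rw [mul_Cr_apply_last (revVec u) H ⟨i.val, by omega⟩ ⟨n - 1, by omega⟩ rfl hn]
  rw [revVec_last]
  have hrv : ∀ k : Fin n, revVec u (⟨k.val, by omega⟩ : Fin (n + 1)) = u ⟨n - k.val, by omega⟩ :=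
    fun k => revVec_mk u k.val (by omega)
  rw [mul_sub, Finset.mul_sum]
  have hterm : ∀ k : Fin n,
      u 0 * (H ⟨i.val, by omega⟩ k * (-(revVec u ⟨k.val, by omega⟩) / u 0))
        = -(H ⟨i.val, by omega⟩ k * u ⟨n - k.val, by omega⟩) := by
    intro k
    rw [hrv k]
    field_simp
  rw [Finset.sum_congr rfl (fun k _ => hterm k), Finset.sum_neg_distrib]
  show (∑ k : Fin n, H ⟨i.val, by omega⟩ k * u ⟨n - k.val, by omega⟩)
      + H ⟨i.val + 1, by omega⟩ ⟨n - 1, by omega⟩ * u 0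
    = u 0 * H ⟨i.val + 1, by omega⟩ ⟨n - 1, by omega⟩
      - -∑ k : Fin n, H ⟨i.val, by omega⟩ k * u ⟨n - k.val, by omega⟩
  ring

end HankelAux

/-- Corollary (Hankel similarity, bottom/right version): for an invertible Hankel `H`,
`u^J ∈ ker ∂H` iff `C_b(u)H` and `HC_r(u^J)` are Hankel and `C_b(u)H = HC_r(u^J)`. -/
theorem hankel_similarity_bottom_right
    (n : ℕ) (hn : 2 ≤ n) (H : Matrix (Fin n) (Fin n) ℝ)
    (hHinv : IsUnit H.det) (hH : IsHankel H)
    (u : Fin (n + 1) → ℝ) (hu1 : u 0 ≠ 0) (hun : u (Fin.last n) ≠ 0) :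
    (dH H).mulVec (revVec u) = 0 ↔
      (IsHankel (Cb n u * H) ∧ IsHankel (H * Cr n (revVec u)) ∧
        Cb n u * H = H * Cr n (revVec u)) := by
  have hgen := hank_gen H hH
  constructor
  · intro hker
    have hcol : ∀ (i : Fin n), i.val < n - 1 →
        (Cb n u * H) i ⟨n - 1, by omega⟩ = (H * Cr n (revVec u)) i ⟨n - 1, by omega⟩ := by
      intro i hi
      have hk := key_identity hn H u hu1 ⟨i.val, by omega⟩
      rw [hker] at hk
      simp only [Pi.zero_apply] at hk
      have := (mul_eq_zero.mp hk.symm).resolve_left hu1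
      have heq : (⟨i.val, by omega⟩ : Fin n) = i := Fin.ext rfl
      rw [heq] at this
      linarith [this]
    have heq : Cb n u * H = H * Cr n (revVec u) := by
      ext i j
      by_cases hi : i.val = n - 1 <;> by_cases hj : j.val = n - 1
      · -- both last
        rw [Cb_mul_apply_bot u H i j hi hn, mul_Cr_apply_last (revVec u) H i j hj hn]
        rw [revVec_last]
        refine Finset.sum_congr rfl fun k _ => ?_
        rw [revVec_mk]
        rw [show H k j = H i k from hgen k.val j.val i.val k.val k.isLt j.isLt i.isLt k.isLt (by omega)]
        ring
      · -- i last, j not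
        rw [Cb_mul_apply_bot u H i j hi hn, mul_Cr_apply_left (revVec u) H i j (by omega)]
        have h1 : (∑ k : Fin n, (-u ⟨n - k.val, by omega⟩ / u 0) * H k j)
            = (H * Cr n (revVec u)) j ⟨n - 1, by omega⟩ := by
          rw [mul_Cr_apply_last (revVec u) H j ⟨n - 1, by omega⟩ rfl hn, revVec_last]
          refine Finset.sum_congr rfl fun k _ => ?_
          rw [revVec_mk]
          rw [show H k j = H j k from hgen k.val j.val j.val k.val k.isLt j.isLt j.isLt k.isLt (by omega)]
          ring
        rw [h1, ← hcol j (by omega), Cb_mul_apply_top u H j _ (by omega)]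
        exact hgen (j.val + 1) (n - 1) i.val (j.val + 1) (by omega) (by omega) i.isLt (by omega) (by omega)
      · -- j last, i not
        have hj' : j = ⟨n - 1, by omega⟩ := Fin.ext hj
        rw [hj']
        exact hcol i (by omega)
      · rw [Cb_mul_apply_top u H i j (by omega), mul_Cr_apply_left (revVec u) H i j (by omega)]
        exact hgen (i.val + 1) j.val i.val (j.val + 1) (by omega) j.isLt i.isLt (by omega) (by omega)
    refine ⟨?_, ?_, heq⟩
    · intro i j hi' hj'
      have hrhs : (Cb n u * H) i ⟨j.val + 1, hj'⟩ = H ⟨i.val + 1, hi'⟩ ⟨j.val + 1, hj'⟩ :=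
        Cb_mul_apply_top u H i _ (by omega)
      by_cases hc : i.val + 1 < n - 1
      · rw [Cb_mul_apply_top u H ⟨i.val + 1, hi'⟩ j (by exact (show i.val + 1 < n - 1 by omega)), hrhs]
        exact hgen (i.val + 1 + 1) j.val (i.val + 1) (j.val + 1) (by omega) j.isLt hi' hj' (by omega)
      · rw [hrhs,
            show (Cb n u * H) ⟨i.val + 1, hi'⟩ j = (H * Cr n (revVec u)) ⟨i.val + 1, hi'⟩ j from
              congrFun (congrFun heq _) j,
            mul_Cr_apply_left (revVec u) H ⟨i.val + 1, hi'⟩ j (by omega)]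
    · intro i j hi' hj'
      have hlhs : (H * Cr n (revVec u)) ⟨i.val + 1, hi'⟩ j = H ⟨i.val + 1, hi'⟩ ⟨j.val + 1, hj'⟩ :=
        mul_Cr_apply_left (revVec u) H _ j (by omega)
      by_cases hc : j.val + 1 < n - 1
      · rw [mul_Cr_apply_left (revVec u) H i ⟨j.val + 1, hj'⟩ (by exact (show j.val + 1 < n - 1 by omega)), hlhs]
        exact hgen (i.val + 1) (j.val + 1) i.val (j.val + 1 + 1) hi' hj' i.isLt (by omega) (by omega)
      · rw [hlhs,
            show (H * Cr n (revVec u)) i ⟨j.val + 1, hj'⟩ = (Cb n u * H) i ⟨j.val + 1, hj'⟩ from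
              (congrFun (congrFun heq i) _).symm,
            Cb_mul_apply_top u H i ⟨j.val + 1, hj'⟩ (by omega)]
  · rintro ⟨-, -, heq⟩
    funext i
    rw [key_identity hn H u hu1 i, heq]
    simp
end
end

section
/- Let n ≥ 2 and let a, b, a₁, b₁ ∈ ℝ^{n+1} be vectors such that the Toeplitz Bezoutians B_T(a,b) and B_T(a₁,b₁) are both nonzero matrices. Then B_T(a₁,b₁) = B_T(a,b) if and only if there exists a 2×2 real matrix φ with det φ = 1 such that a₁ = φ₁₁·a + φ₂₁·b and b₁ = φ₁₂·a + φ₂₂·b (i.e. [a₁ b₁] = [a b]·φ as (n+1)×2 matrices). -/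
open Matrix Polynomial

noncomputable section

/-- Auxiliary: the wedge values `u_p v_q - v_p u_q` as a total function on `ℕ × ℕ`. -/
def Wn (n : ℕ) (u v : Fin (n + 1) → ℝ) (p q : ℕ) : ℝ :=
  if h : p ≤ n ∧ q ≤ n then
    u ⟨p, by omega⟩ * v ⟨q, by omega⟩ - v ⟨p, by omega⟩ * u ⟨q, by omega⟩
  else 0

lemma Wn_eq (n : ℕ) (u v : Fin (n + 1) → ℝ) (p q : ℕ) (hp : p ≤ n) (hq : q ≤ n) :
    Wn n u v p q
      = u ⟨p, by omega⟩ * v ⟨q, by omega⟩ - v ⟨p, by omega⟩ * u ⟨q, by omega⟩ := by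
  rw [Wn, dif_pos ⟨hp, hq⟩]

lemma Wn_antisymm (n : ℕ) (u v : Fin (n + 1) → ℝ) (p q : ℕ) :
    Wn n u v p q = -Wn n u v q p := by
  unfold Wn
  by_cases h : p ≤ n ∧ q ≤ n
  · rw [dif_pos h, dif_pos ⟨h.2, h.1⟩]; ring
  · rw [dif_neg h, dif_neg (fun h' => h ⟨h'.2, h'.1⟩)]; ring

lemma BT_apply (n : ℕ) (u v : Fin (n + 1) → ℝ) (i j : Fin n) :
    BT n u v i j = ∑ k ∈ Finset.range (min i.val j.val + 1),
      Wn n u v (i.val - k) (n - (j.val - k)) := by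
  have hi := i.isLt; have hj := j.isLt
  have step : BT n u v i j
      = ∑ k ∈ Finset.range n,
        (if k ≤ i.val ∧ k ≤ j.val then Wn n u v (i.val - k) (n - (j.val - k)) else 0) := by
    rw [BT, Matrix.sub_apply, Matrix.mul_apply, Matrix.mul_apply, ← Finset.sum_sub_distrib,
      ← Fin.sum_univ_eq_sum_range]
    refine Finset.sum_congr rfl fun k _ => ?_
    simp only [Uplus, Uminus, Matrix.of_apply]
    by_cases h1 : k.val ≤ i.val <;> by_cases h2 : k.val ≤ j.val
    · rw [if_pos h1, dif_pos h2, if_pos h1, dif_pos h2, if_pos ⟨h1, h2⟩,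
        Wn_eq n u v _ _ (by omega) (by omega)]
      simp only [show n + k.val - j.val = n - (j.val - k.val) from by omega]
    · rw [if_neg (show ¬(k.val ≤ i.val ∧ k.val ≤ j.val) from fun h => h2 h.2),
        dif_neg h2, dif_neg h2]; ring
    · rw [if_neg (show ¬(k.val ≤ i.val ∧ k.val ≤ j.val) from fun h => h1 h.1),
        if_neg h1, if_neg h1]; ring
    · rw [if_neg (show ¬(k.val ≤ i.val ∧ k.val ≤ j.val) from fun h => h1 h.1),
        if_neg h1, if_neg h1]; ring
  rw [step]
  have hsub : Finset.range (min i.val j.val + 1) ⊆ Finset.range n := by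
    intro x hx; simp only [Finset.mem_range] at *; omega
  rw [← Finset.sum_subset hsub (fun x _ hx => by
    rw [if_neg]; simp only [Finset.mem_range] at hx; omega)]
  refine Finset.sum_congr rfl fun k hk => ?_
  simp only [Finset.mem_range] at hk
  rw [if_pos ⟨by omega, by omega⟩]

lemma S_eq_zero (n : ℕ) (hn : 1 ≤ n) (S : ℕ → ℕ → ℝ)
    (hanti : ∀ p q, S p q = -S q p)
    (hL : ∀ i j : Fin n, ∑ k ∈ Finset.range (min i.val j.val + 1),
      S (i.val - k) (n - (j.val - k)) = 0) :
    ∀ p q, p ≤ n → q ≤ n → S p q = 0 := by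
  have hrow : ∀ p, p < n → S p n = 0 := by
    intro p hp
    have h : ∑ k ∈ Finset.range (min p 0 + 1), S (p - k) (n - (0 - k)) = 0 :=
      hL ⟨p, hp⟩ ⟨0, by omega⟩
    simpa using h
  have hcol0 : ∀ q, 1 ≤ q → q ≤ n → S 0 q = 0 := by
    intro q h1 h2
    have h : ∑ k ∈ Finset.range (min 0 (n - q) + 1), S (0 - k) (n - (n - q - k)) = 0 :=
      hL ⟨0, by omega⟩ ⟨n - q, by omega⟩
    simp only [Nat.zero_min, zero_add, Finset.sum_range_one, Nat.sub_zero, Nat.zero_sub] at h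
    rwa [show n - (n - q) = q from by omega] at h
  have hint : ∀ p q, 1 ≤ p → p < n → 1 ≤ q → q < n → S p q = 0 := by
    intro p q hp1 hp2 hq1 hq2
    set t := n - q with ht
    have ht2 : t < n := by omega
    have h1 : ∑ k ∈ Finset.range (min p t + 1), S (p - k) (n - (t - k)) = 0 :=
      hL ⟨p, hp2⟩ ⟨t, ht2⟩
    have h2 : ∑ k ∈ Finset.range (min (p - 1) (t - 1) + 1),
        S (p - 1 - k) (n - (t - 1 - k)) = 0 :=
      hL ⟨p - 1, by omega⟩ ⟨t - 1, by omega⟩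
    rw [show min (p - 1) (t - 1) + 1 = min p t from by omega] at h2
    rw [Finset.sum_range_succ'] at h1
    have hsum : ∑ k ∈ Finset.range (min p t), S (p - (k + 1)) (n - (t - (k + 1)))
        = ∑ k ∈ Finset.range (min p t), S (p - 1 - k) (n - (t - 1 - k)) := by
      refine Finset.sum_congr rfl fun k _ => ?_
      rw [show p - (k + 1) = p - 1 - k from by omega,
        show t - (k + 1) = t - 1 - k from by omega]
    rw [hsum, h2, zero_add, Nat.sub_zero, Nat.sub_zero] at h1
    rwa [show n - t = q from by omega] at h1
  intro p q hp hq
  rcases eq_or_lt_of_le hq with hqn | hqn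
  · rw [hqn]
    rcases eq_or_lt_of_le hp with hpn | hpn
    · rw [hpn]; have := hanti n n; linarith
    · exact hrow p hpn
  · rcases eq_or_lt_of_le hp with hpn | hpn
    · rw [hpn, hanti, hrow q hqn, neg_zero]
    · rcases Nat.eq_zero_or_pos q with hq0 | hq0
      · subst hq0
        rcases Nat.eq_zero_or_pos p with hp0 | hp0
        · subst hp0; have := hanti 0 0; linarith
        · rw [hanti, hcol0 p hp0 (by omega), neg_zero]
      · rcases Nat.eq_zero_or_pos p with hp0 | hp0
        · subst hp0; exact hcol0 q hq0 (by omega)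
        · exact hint p q hp0 hpn hq0 hqn

lemma wedge_eq_of_BT_eq (n : ℕ) (hn : 1 ≤ n) (u v u' v' : Fin (n + 1) → ℝ)
    (h : BT n u v = BT n u' v') :
    ∀ p q : Fin (n + 1), u p * v q - v p * u q = u' p * v' q - v' p * u' q := by
  have key := S_eq_zero n hn (fun p q => Wn n u v p q - Wn n u' v' p q)
    (fun p q => by
      show Wn n u v p q - Wn n u' v' p q = -(Wn n u v q p - Wn n u' v' q p)
      rw [Wn_antisymm n u v, Wn_antisymm n u' v']; ring)
    (fun i j => by
      show ∑ k ∈ Finset.range (min i.val j.val + 1),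
        (Wn n u v (i.val - k) (n - (j.val - k))
          - Wn n u' v' (i.val - k) (n - (j.val - k))) = 0
      rw [Finset.sum_sub_distrib, ← BT_apply, ← BT_apply, h, sub_self])
  intro p q
  have hp : p.val ≤ n := by omega
  have hq : q.val ≤ n := by omega
  have h0 : Wn n u v p.val q.val - Wn n u' v' p.val q.val = 0 := key p.val q.val hp hq
  rw [Wn_eq n u v _ _ hp hq, Wn_eq n u' v' _ _ hp hq] at h0
  have := sub_eq_zero.mp h0
  simpa using this

lemma BT_eq_of_wedge_eq (n : ℕ) (u v u' v' : Fin (n + 1) → ℝ)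
    (h : ∀ p q : Fin (n + 1), u p * v q - v p * u q = u' p * v' q - v' p * u' q) :
    BT n u v = BT n u' v' := by
  ext i j
  rw [BT_apply, BT_apply]
  refine Finset.sum_congr rfl fun k hk => ?_
  simp only [Finset.mem_range] at hk
  have h1 : i.val - k ≤ n := by have := i.isLt; omega
  have h2 : n - (j.val - k) ≤ n := by omega
  rw [Wn_eq n u v _ _ h1 h2, Wn_eq n u' v' _ _ h1 h2]
  exact h _ _

lemma exists_wedge_ne (n : ℕ) (u v : Fin (n + 1) → ℝ) (h : BT n u v ≠ 0) :
    ∃ p q : Fin (n + 1), u p * v q - v p * u q ≠ 0 := by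
  by_contra hc
  push_neg at hc
  apply h
  ext i j
  rw [BT_apply, Matrix.zero_apply]
  refine Finset.sum_eq_zero fun k hk => ?_
  simp only [Finset.mem_range] at hk
  have h1 : i.val - k ≤ n := by have := i.isLt; omega
  have h2 : n - (j.val - k) ≤ n := by omega
  rw [Wn_eq n u v _ _ h1 h2]
  exact hc _ _

/-- Two nonzero Toeplitz Bezoutians coincide iff the generating pairs of vectors differ
by a `2×2` matrix `φ` of determinant `1`. -/
theorem toeplitz_bezoutian_coincide
    (n : ℕ) (hn : 2 ≤ n) (a b a₁ b₁ : Fin (n + 1) → ℝ)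
    (hab : BT n a b ≠ 0) (hab₁ : BT n a₁ b₁ ≠ 0) :
    BT n a₁ b₁ = BT n a b ↔
      ∃ φ : Matrix (Fin 2) (Fin 2) ℝ, φ.det = 1 ∧
        a₁ = φ 0 0 • a + φ 1 0 • b ∧ b₁ = φ 0 1 • a + φ 1 1 • b := by
  constructor
  · intro hBT
    have hw : ∀ p q : Fin (n + 1), a₁ p * b₁ q - b₁ p * a₁ q = a p * b q - b p * a q :=
      wedge_eq_of_BT_eq n (by omega) a₁ b₁ a b hBT
    obtain ⟨p₀, q₀, hD⟩ := exists_wedge_ne n a b hab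
    have ha1 : a₁ = ((a₁ p₀ * b q₀ - a₁ q₀ * b p₀) / (a p₀ * b q₀ - b p₀ * a q₀)) • a
        + ((a₁ q₀ * a p₀ - a₁ p₀ * a q₀) / (a p₀ * b q₀ - b p₀ * a q₀)) • b := by
      funext r
      have k : a₁ r * (a p₀ * b q₀ - b p₀ * a q₀)
          = a₁ p₀ * (a r * b q₀ - b r * a q₀) - a₁ q₀ * (a r * b p₀ - b r * a p₀) := by
        rw [← hw p₀ q₀, ← hw r q₀, ← hw r p₀]; ring
      simp only [Pi.add_apply, Pi.smul_apply, smul_eq_mul]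
      rw [div_mul_eq_mul_div, div_mul_eq_mul_div, ← add_div, eq_div_iff hD]
      linear_combination k
    have hb1 : b₁ = ((b₁ p₀ * b q₀ - b₁ q₀ * b p₀) / (a p₀ * b q₀ - b p₀ * a q₀)) • a
        + ((b₁ q₀ * a p₀ - b₁ p₀ * a q₀) / (a p₀ * b q₀ - b p₀ * a q₀)) • b := by
      funext r
      have k : b₁ r * (a p₀ * b q₀ - b p₀ * a q₀)
          = b₁ p₀ * (a r * b q₀ - b r * a q₀) - b₁ q₀ * (a r * b p₀ - b r * a p₀) := by
        rw [← hw p₀ q₀, ← hw r q₀, ← hw r p₀]; ring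
      simp only [Pi.add_apply, Pi.smul_apply, smul_eq_mul]
      rw [div_mul_eq_mul_div, div_mul_eq_mul_div, ← add_div, eq_div_iff hD]
      linear_combination k
    refine ⟨!![(a₁ p₀ * b q₀ - a₁ q₀ * b p₀) / (a p₀ * b q₀ - b p₀ * a q₀),
               (b₁ p₀ * b q₀ - b₁ q₀ * b p₀) / (a p₀ * b q₀ - b p₀ * a q₀);
               (a₁ q₀ * a p₀ - a₁ p₀ * a q₀) / (a p₀ * b q₀ - b p₀ * a q₀),
               (b₁ q₀ * a p₀ - b₁ p₀ * a q₀) / (a p₀ * b q₀ - b p₀ * a q₀)], ?_, ?_, ?_⟩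
    · rw [Matrix.det_fin_two_of]
      rw [div_mul_div_comm, div_mul_div_comm, div_sub_div_same, div_eq_one_iff_eq (mul_ne_zero hD hD)]
      linear_combination (a p₀ * b q₀ - b p₀ * a q₀) * hw p₀ q₀
    · simpa using ha1
    · simpa using hb1
  · rintro ⟨φ, hdet, ha1, hb1⟩
    apply BT_eq_of_wedge_eq
    intro p q
    rw [Matrix.det_fin_two] at hdet
    have e1 := congrFun ha1 p
    have e2 := congrFun ha1 q
    have e3 := congrFun hb1 p
    have e4 := congrFun hb1 q
    simp only [Pi.add_apply, Pi.smul_apply, smul_eq_mul] at e1 e2 e3 e4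
    rw [e1, e2, e3, e4]
    linear_combination (a p * b q - b p * a q) * hdet
end
end

section
/- Let n ≥ 2, let T be an invertible n×n real Toeplitz matrix, and let a, b ∈ ℝ^{n+1} be linearly independent vectors that span the kernel of ∂T. Then there exists a nonzero real number c such that B_T(a,b) = c·T⁻¹. -/
open Matrix Polynomial

noncomputable section

open Finset

lemma sum_swap_zero (s : Finset (ℕ × ℕ)) (hs : ∀ q ∈ s, q.swap ∈ s)
    (f : ℕ × ℕ → ℝ) (hf : ∀ q, f q.swap = - f q) : ∑ q ∈ s, f q = 0 := by
  apply Finset.sum_involution (fun q _ => q.swap)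
  · intro q hq; rw [hf]; ring
  · intro q hq hfq hswap
    apply hfq
    have h2 : f q.swap = f q := by rw [hswap]
    have := hf q; linarith
  · intro q hq; exact Prod.swap_swap q
  · intro q hq; exact hs q hq

lemma sum_transpose (s u : Finset ℕ) (f : ℕ → ℕ → ℝ) (hf : ∀ m p, f p m = - f m p) :
    ∑ m ∈ s, ∑ p ∈ u, f m p = - ∑ m ∈ u, ∑ p ∈ s, f m p := by
  rw [Finset.sum_comm]
  have : ∀ p ∈ u, ∑ m ∈ s, f m p = -∑ m ∈ s, f p m := by
    intro p _
    rw [← Finset.sum_neg_distrib]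
    exact Finset.sum_congr rfl fun m _ => by rw [hf p m]
  rw [Finset.sum_congr rfl this, Finset.sum_neg_distrib]

lemma sq_zero (s : Finset ℕ) (f : ℕ → ℕ → ℝ) (hf : ∀ m p, f p m = - f m p) :
    ∑ m ∈ s, ∑ p ∈ s, f m p = 0 := by
  have h := sum_transpose s s f hf
  linarith

lemma sum_Icc_split (f : ℕ → ℝ) (a b c : ℕ) (h1 : a ≤ b + 1) (h2 : b ≤ c) :
    ∑ x ∈ Icc a c, f x = ∑ x ∈ Icc a b, f x + ∑ x ∈ Icc (b+1) c, f x := by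
  rw [← Finset.sum_union]
  · congr 1
    ext x
    simp only [Finset.mem_union, Finset.mem_Icc]
    omega
  · rw [Finset.disjoint_left]
    intro x hx hx'
    simp only [Finset.mem_Icc] at hx hx'
    omega

lemma tbCore (n : ℕ) (hn : 2 ≤ n) (t : ℤ → ℝ) (A B : ℕ → ℝ)
    (hKA : ∀ r : ℤ, 1 ≤ r → r ≤ (n:ℤ) - 1 → ∑ p ∈ Icc 0 n, t (r - p) * A p = 0)
    (hKB : ∀ r : ℤ, 1 ≤ r → r ≤ (n:ℤ) - 1 → ∑ p ∈ Icc 0 n, t (r - p) * B p = 0)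
    (i l : ℕ) (hi : i ≤ n - 1) (hl : l ≤ n - 1) :
    ∑ j ∈ Icc 0 (n-1), ∑ k ∈ Icc 0 (n-1),
      (if k ≤ j ∧ k ≤ l then
        t ((i:ℤ) - j) * (A (j-k) * B (n+k-l) - B (j-k) * A (n+k-l)) else 0)
    = if i = l then ∑ p ∈ Icc 1 n, t ((n:ℤ) - p) * (A 0 * B p - B 0 * A p) else 0 := by
  set β : ℕ → ℕ → ℝ := fun m p => A m * B p - B m * A p with hβ
  set f : ℕ → ℕ → ℝ := fun m p => t ((i:ℤ) + n - l - m - p) * β m p with hfdef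
  have hfanti : ∀ m p, f p m = - f m p := by
    intro m p
    simp only [hfdef, hβ]
    rw [show (i:ℤ) + n - l - p - m = (i:ℤ) + n - l - m - p from by ring]
    ring
  have hK2 : ∀ (m : ℕ) (r : ℤ), 1 ≤ r → r ≤ (n:ℤ) - 1 →
      ∑ p ∈ Icc 0 n, t (r - p) * β m p = 0 := by
    intro m r h1 h2
    have e : ∑ p ∈ Icc 0 n, t (r - p) * β m p
        = A m * (∑ p ∈ Icc 0 n, t (r - p) * B p) - B m * (∑ p ∈ Icc 0 n, t (r - p) * A p) := by
      rw [Finset.mul_sum, Finset.mul_sum, ← Finset.sum_sub_distrib]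
      exact Finset.sum_congr rfl fun p _ => by simp only [hβ]; ring
    rw [e, hKA r h1 h2, hKB r h1 h2]; ring
  have hK1 : ∀ (p : ℕ) (r : ℤ), 1 ≤ r → r ≤ (n:ℤ) - 1 →
      ∑ m ∈ Icc 0 n, t (r - m) * β m p = 0 := by
    intro p r h1 h2
    have e : ∑ m ∈ Icc 0 n, t (r - m) * β m p
        = (∑ m ∈ Icc 0 n, t (r - m) * A m) * B p - (∑ m ∈ Icc 0 n, t (r - m) * B m) * A p := by
      rw [Finset.sum_mul, Finset.sum_mul, ← Finset.sum_sub_distrib]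
      exact Finset.sum_congr rfl fun m _ => by simp only [hβ]; ring
    rw [e, hKA r h1 h2, hKB r h1 h2]; ring
  have hsplitIcc : ∀ g : ℕ → ℝ, ∑ p ∈ Icc 0 n, g p
      = ∑ p ∈ Icc 0 (n-1-l), g p + ∑ p ∈ Icc (n-l) n, g p := by
    intro g
    have h := sum_Icc_split g 0 (n-1-l) n (by omega) (by omega)
    rw [show n-1-l+1 = n-l from by omega] at h
    exact h
  have hInner : ∀ m : ℕ, 1 ≤ (i:ℤ) + n - l - m → (i:ℤ) + n - l - m ≤ (n:ℤ) - 1 →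
      ∑ p ∈ Icc (n-l) n, f m p = - ∑ p ∈ Icc 0 (n-1-l), f m p := by
    intro m h1 h2
    have h0 : ∑ p ∈ Icc 0 n, f m p = 0 := by
      simpa only [hfdef] using hK2 m ((i:ℤ) + n - l - m) h1 h2
    rw [hsplitIcc (f m)] at h0
    linarith
  -- Step 1: reindex
  have step1 : ∑ j ∈ Icc 0 (n-1), ∑ k ∈ Icc 0 (n-1),
      (if k ≤ j ∧ k ≤ l then
        t ((i:ℤ) - j) * (A (j-k) * B (n+k-l) - B (j-k) * A (n+k-l)) else 0)
      = ∑ q ∈ ((Icc 0 (n-1)) ×ˢ (Icc (n-l) n)).filter (fun q => q.1 + q.2 ≤ 2*n-1-l),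
          f q.1 q.2 := by
    rw [← Finset.sum_product']
    rw [← Finset.sum_filter]
    apply Finset.sum_nbij' (i := fun q => (q.1 - q.2, n + q.2 - l))
      (j := fun q => (q.1 + q.2 + l - n, q.2 + l - n))
    · intro q hq
      simp only [Finset.mem_filter, Finset.mem_product, Finset.mem_Icc] at hq ⊢
      omega
    · intro q hq
      simp only [Finset.mem_filter, Finset.mem_product, Finset.mem_Icc] at hq ⊢
      omega
    · intro q hq
      simp only [Finset.mem_filter, Finset.mem_product, Finset.mem_Icc] at hq
      ext <;> simp <;> omega
    · intro q hq
      simp only [Finset.mem_filter, Finset.mem_product, Finset.mem_Icc] at hq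
      ext <;> simp <;> omega
    · intro q hq
      simp only [Finset.mem_filter, Finset.mem_product, Finset.mem_Icc] at hq
      simp only [hfdef, hβ]
      congr 2
      omega
  rw [step1]
  rw [← Finset.sum_filter_add_sum_filter_not
      (((Icc 0 (n-1)) ×ˢ (Icc (n-l) n)).filter (fun q => q.1 + q.2 ≤ 2*n-1-l))
      (fun q => q.1 ≤ n-1-l) (fun q => f q.1 q.2)]
  have hR2 : ∑ q ∈ (((Icc 0 (n-1)) ×ˢ (Icc (n-l) n)).filter
        (fun q => q.1 + q.2 ≤ 2*n-1-l)).filter (fun q => ¬ q.1 ≤ n-1-l), f q.1 q.2 = 0 := by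
    apply sum_swap_zero
    · intro q hq
      simp only [Finset.mem_filter, Finset.mem_product, Finset.mem_Icc,
        Prod.fst_swap, Prod.snd_swap] at hq ⊢
      omega
    · intro q; exact hfanti q.1 q.2
  have hR1 : (((Icc 0 (n-1)) ×ˢ (Icc (n-l) n)).filter
        (fun q => q.1 + q.2 ≤ 2*n-1-l)).filter (fun q => q.1 ≤ n-1-l)
      = Icc 0 (n-1-l) ×ˢ Icc (n-l) n := by
    ext q
    simp only [Finset.mem_filter, Finset.mem_product, Finset.mem_Icc]
    omega
  rw [hR1, hR2, add_zero, Finset.sum_product']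
  -- Now: ∑ m ∈ Icc 0 (n-1-l), ∑ p ∈ Icc (n-l) n, f m p = RHS
  rcases Nat.lt_or_ge i l with hlt | hge
  · -- case i < l : everything vanishes
    rw [if_neg (by omega)]
    have e1 : ∀ m ∈ Icc 0 (n-1-l), ∑ p ∈ Icc (n-l) n, f m p
        = - ∑ p ∈ Icc 0 (n-1-l), f m p := by
      intro m hm
      simp only [Finset.mem_Icc] at hm
      exact hInner m (by omega) (by omega)
    rw [Finset.sum_congr rfl e1, Finset.sum_neg_distrib, sq_zero _ f hfanti, neg_zero]
  · -- case l ≤ i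
    set d := i - l with hd
    have hdle : d ≤ n-1-l := by omega
    rw [sum_Icc_split (fun m => ∑ p ∈ Icc (n-l) n, f m p) 0 d (n-1-l) (by omega) hdle]
    have hblock2 : ∑ m ∈ Icc (d+1) (n-1-l), ∑ p ∈ Icc (n-l) n, f m p
        = ∑ m ∈ Icc 0 d, ∑ p ∈ Icc (d+1) (n-1-l), f m p := by
      have e1 : ∀ m ∈ Icc (d+1) (n-1-l), ∑ p ∈ Icc (n-l) n, f m p
          = - ∑ p ∈ Icc 0 (n-1-l), f m p := by
        intro m hm
        simp only [Finset.mem_Icc] at hm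
        exact hInner m (by omega) (by omega)
      rw [Finset.sum_congr rfl e1, Finset.sum_neg_distrib]
      rw [Finset.sum_congr rfl
        (fun m _ => sum_Icc_split (f m) 0 d (n-1-l) (by omega) hdle)]
      rw [Finset.sum_add_distrib]
      have hsq := sq_zero (Icc (d+1) (n-1-l)) f hfanti
      have htr := sum_transpose (Icc (d+1) (n-1-l)) (Icc 0 d) f hfanti
      linarith
    rw [hblock2, ← Finset.sum_add_distrib]
    have hcomb : ∀ m ∈ Icc 0 d, (∑ p ∈ Icc (n-l) n, f m p + ∑ p ∈ Icc (d+1) (n-1-l), f m p)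
        = ∑ p ∈ Icc (d+1) n, f m p := by
      intro m _
      have h := sum_Icc_split (f m) (d+1) (n-1-l) n (by omega) (by omega)
      rw [show n-1-l+1 = n-l from by omega] at h
      linarith
    rw [Finset.sum_congr rfl hcomb]
    rcases Nat.eq_zero_or_pos d with hd0 | hdpos
    · -- i = l
      have hil : i = l := by omega
      rw [if_pos hil, hd0, Finset.Icc_self, Finset.sum_singleton]
      apply Finset.sum_congr rfl
      intro p hp
      simp only [hfdef, hβ]
      congr 2
      push_cast
      omega
    · -- d ≥ 1
      rw [if_neg (by omega)]
      rw [Finset.sum_comm]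
      have hK1' : ∀ p ∈ Icc (d+1) n, ∑ m ∈ Icc 0 d, f m p
          = - ∑ m ∈ Icc (d+1) n, f m p := by
        intro p hp
        simp only [Finset.mem_Icc] at hp
        have h0 := hK1 p ((i:ℤ) + n - l - p) (by omega) (by omega)
        have hc : ∀ m ∈ Icc 0 n, t (((i:ℤ) + n - l - p) - m) * β m p = f m p := by
          intro m _
          simp only [hfdef]
          congr 2
          ring
        rw [Finset.sum_congr rfl hc] at h0
        rw [sum_Icc_split (fun m => f m p) 0 d n (by omega) (by omega)] at h0
        linarith
      rw [Finset.sum_congr rfl hK1', Finset.sum_neg_distrib]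
      rw [sq_zero (Icc (d+1) n) (fun p m => f m p) (fun m p => hfanti p m), neg_zero]

/-- If `{a, b}` is a basis of the kernel of `∂T` for an invertible Toeplitz matrix `T`,
then the Toeplitz Bezoutian `B_T(a,b)` is a nonzero scalar multiple of `T⁻¹`. -/
theorem toeplitz_bezoutian_inverse
    (n : ℕ) (hn : 2 ≤ n) (T : Matrix (Fin n) (Fin n) ℝ)
    (hTinv : IsUnit T.det) (hT : IsToeplitz T)
    (a b : Fin (n + 1) → ℝ)
    (hli : LinearIndependent ℝ ![a, b])
    (hspan : Submodule.span ℝ {a, b} = LinearMap.ker (Matrix.mulVecLin (dT T))) :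
    ∃ c : ℝ, c ≠ 0 ∧ BT n a b = c • T⁻¹ := by
  classical
  -- the symbol function of the Toeplitz matrix
  set t : ℤ → ℝ := fun k =>
    if h : 0 ≤ k ∧ k ≤ (n:ℤ) - 1 then T ⟨k.toNat, by omega⟩ ⟨0, by omega⟩
    else if h2 : 1 - (n:ℤ) ≤ k ∧ k < 0 then T ⟨0, by omega⟩ ⟨(-k).toNat, by omega⟩
    else 0 with htdef
  have hshift : ∀ (k : ℕ) (i j : Fin n), k ≤ i.val → k ≤ j.val →
      T i j = T ⟨i.val - k, by have := i.isLt; omega⟩ ⟨j.val - k, by have := j.isLt; omega⟩ := by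
    intro k
    induction k with
    | zero =>
      intro i j _ _
      congr 1 <;> exact Fin.ext (by simp)
    | succ k ih =>
      intro i j h1 h2
      rw [ih i j (by omega) (by omega)]
      have h := hT ⟨i.val - (k+1), by have := i.isLt; omega⟩
        ⟨j.val - (k+1), by have := j.isLt; omega⟩
        (by show i.val - (k+1) + 1 < n; have := i.isLt; omega)
        (by show j.val - (k+1) + 1 < n; have := j.isLt; omega)
      rw [← h]
      congr 1 <;> exact Fin.ext (by simp; try omega)
  have hTent : ∀ i j : Fin n, T i j = t ((i.val : ℤ) - (j.val : ℤ)) := by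
    intro i j
    rcases le_or_gt j.val i.val with hji | hij
    · rw [hshift j.val i j hji (le_refl _)]
      simp only [htdef]
      rw [dif_pos (show 0 ≤ (i.val:ℤ) - j.val ∧ (i.val:ℤ) - j.val ≤ (n:ℤ) - 1 by
        constructor <;> [omega; (have := i.isLt; omega)])]
      congr 1 <;> exact Fin.ext (by simp; try omega)
    · rw [hshift i.val i j (le_refl _) (le_of_lt hij)]
      simp only [htdef]
      rw [dif_neg (show ¬(0 ≤ (i.val:ℤ) - j.val ∧ (i.val:ℤ) - j.val ≤ (n:ℤ) - 1) by omega)]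
      rw [dif_pos (show 1 - (n:ℤ) ≤ (i.val:ℤ) - j.val ∧ (i.val:ℤ) - j.val < 0 by
        constructor <;> [(have := j.isLt; omega); omega])]
      congr 1 <;> exact Fin.ext (by simp; try omega)
  -- kernel membership of a and b
  have haK : Matrix.mulVec (dT T) a = 0 := by
    have h : a ∈ LinearMap.ker (Matrix.mulVecLin (dT T)) := by
      rw [← hspan]; exact Submodule.subset_span (Set.mem_insert a {b})
    have h2 := LinearMap.mem_ker.mp h
    rwa [Matrix.mulVecLin_apply] at h2
  have hbK : Matrix.mulVec (dT T) b = 0 := by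
    have h : b ∈ LinearMap.ker (Matrix.mulVecLin (dT T)) := by
      rw [← hspan]
      exact Submodule.subset_span (Set.mem_insert_of_mem a rfl)
    have h2 := LinearMap.mem_ker.mp h
    rwa [Matrix.mulVecLin_apply] at h2
  -- sequence versions of a and b
  set A : ℕ → ℝ := fun m => if h : m < n+1 then a ⟨m, h⟩ else 0 with hAdef
  set B : ℕ → ℝ := fun m => if h : m < n+1 then b ⟨m, h⟩ else 0 with hBdef
  have hA : ∀ m (h : m < n+1), A m = a ⟨m, h⟩ := by
    intro m h; simp only [hAdef]; rw [dif_pos h]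
  have hB : ∀ m (h : m < n+1), B m = b ⟨m, h⟩ := by
    intro m h; simp only [hBdef]; rw [dif_pos h]
  -- the kernel conditions in symbol form
  have hker : ∀ (u : Fin (n+1) → ℝ) (U : ℕ → ℝ), (∀ m (h : m < n+1), U m = u ⟨m, h⟩) →
      Matrix.mulVec (dT T) u = 0 →
      ∀ r : ℤ, 1 ≤ r → r ≤ (n:ℤ) - 1 →
        ∑ p ∈ Finset.Icc 0 n, t (r - p) * U p = 0 := by
    intro u U hU hu r h1 h2
    have hiF : r.toNat - 1 < n - 1 := by omega
    have h0 := congrFun hu ⟨r.toNat - 1, hiF⟩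
    simp only [Matrix.mulVec, dotProduct, Pi.zero_apply] at h0
    rw [← h0]
    rw [show Finset.Icc (0:ℕ) n = Finset.range (n+1) from by ext x; simp]
    rw [← Fin.sum_univ_eq_sum_range (fun p => t (r - p) * U p) (n+1)]
    apply Finset.sum_congr rfl
    intro j _
    rw [hU j.val j.isLt]
    have hdT : dT T ⟨r.toNat - 1, hiF⟩ j = t (r - (j.val : ℤ)) := by
      simp only [dT, Matrix.of_apply]
      by_cases hj : j.val = 0
      · rw [if_pos hj, hTent]
        congr 1
        simp
        omega
      · rw [if_neg hj, hTent]
        congr 1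
        simp
        omega
    rw [hdT]
  have hKA := hker a A hA haK
  have hKB := hker b B hB hbK
  -- the scalar
  set c : ℝ := ∑ p ∈ Finset.Icc 1 n, t ((n:ℤ) - p) * (A 0 * B p - B 0 * A p) with hcdef
  -- entries of the Bezoutian
  have hBTent : ∀ (j l : Fin n), BT n a b j l = ∑ k : Fin n,
      (if k.val ≤ j.val ∧ k.val ≤ l.val then
        (A (j.val - k.val) * B (n + k.val - l.val) - B (j.val - k.val) * A (n + k.val - l.val))
      else 0) := by
    intro j l
    rw [BT, Matrix.sub_apply, Matrix.mul_apply, Matrix.mul_apply, ← Finset.sum_sub_distrib]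
    apply Finset.sum_congr rfl
    intro k _
    have e1 : Uplus n a j k = if k.val ≤ j.val then A (j.val - k.val) else 0 := by
      simp only [Uplus, Matrix.of_apply]
      by_cases h : k.val ≤ j.val
      · rw [if_pos h, if_pos h, hA _ (by have := j.isLt; omega)]
      · rw [if_neg h, if_neg h]
    have e2 : Uplus n b j k = if k.val ≤ j.val then B (j.val - k.val) else 0 := by
      simp only [Uplus, Matrix.of_apply]
      by_cases h : k.val ≤ j.val
      · rw [if_pos h, if_pos h, hB _ (by have := j.isLt; omega)]
      · rw [if_neg h, if_neg h]
    have e3 : Uminus n b k l = if k.val ≤ l.val then B (n + k.val - l.val) else 0 := by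
      simp only [Uminus, Matrix.of_apply]
      by_cases h : k.val ≤ l.val
      · rw [dif_pos h, if_pos h, hB _ (by have := l.isLt; omega)]
      · rw [dif_neg h, if_neg h]
    have e4 : Uminus n a k l = if k.val ≤ l.val then A (n + k.val - l.val) else 0 := by
      simp only [Uminus, Matrix.of_apply]
      by_cases h : k.val ≤ l.val
      · rw [dif_pos h, if_pos h, hA _ (by have := l.isLt; omega)]
      · rw [dif_neg h, if_neg h]
    rw [e1, e2, e3, e4]
    by_cases h1 : k.val ≤ j.val <;> by_cases h2 : k.val ≤ l.val <;>
      simp [h1, h2]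
  -- the fundamental identity
  have hmul : T * BT n a b = c • (1 : Matrix (Fin n) (Fin n) ℝ) := by
    ext i l
    rw [Matrix.mul_apply]
    have e : ∀ j : Fin n, T i j * BT n a b j l = ∑ k : Fin n,
        (if k.val ≤ j.val ∧ k.val ≤ l.val then
          t ((i.val:ℤ) - j.val) * (A (j.val - k.val) * B (n + k.val - l.val)
            - B (j.val - k.val) * A (n + k.val - l.val)) else 0) := by
      intro j
      rw [hBTent j l, hTent i j, Finset.mul_sum]
      apply Finset.sum_congr rfl
      intro k _
      split_ifs with h
      · rfl
      · exact mul_zero _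
    rw [Finset.sum_congr rfl (fun j _ => e j)]
    have conv1 : ∀ j : Fin n, (∑ k : Fin n,
        (if k.val ≤ j.val ∧ k.val ≤ l.val then
          t ((i.val:ℤ) - j.val) * (A (j.val - k.val) * B (n + k.val - l.val)
            - B (j.val - k.val) * A (n + k.val - l.val)) else 0))
        = ∑ k ∈ Finset.range n,
        (if k ≤ j.val ∧ k ≤ l.val then
          t ((i.val:ℤ) - j.val) * (A (j.val - k) * B (n + k - l.val)
            - B (j.val - k) * A (n + k - l.val)) else 0) := by
      intro j
      exact Fin.sum_univ_eq_sum_range (fun k =>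
        if k ≤ j.val ∧ k ≤ l.val then
          t ((i.val:ℤ) - j.val) * (A (j.val - k) * B (n + k - l.val)
            - B (j.val - k) * A (n + k - l.val)) else 0) n
    rw [Finset.sum_congr rfl (fun j _ => conv1 j)]
    rw [Fin.sum_univ_eq_sum_range (fun j => ∑ k ∈ Finset.range n,
        (if k ≤ j ∧ k ≤ l.val then
          t ((i.val:ℤ) - j) * (A (j - k) * B (n + k - l.val)
            - B (j - k) * A (n + k - l.val)) else 0)) n]
    rw [show Finset.range n = Finset.Icc 0 (n-1) from by ext x; simp; omega]
    rw [tbCore n hn t A B hKA hKB i.val l.val (by have := i.isLt; omega)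
      (by have := l.isLt; omega)]
    rw [Matrix.smul_apply, Matrix.one_apply]
    by_cases h : i = l
    · rw [if_pos (show i.val = l.val from by rw [h]), if_pos h]
      simp [hcdef]
    · rw [if_neg (show ¬ i.val = l.val from fun hv => h (Fin.ext hv)), if_neg h]
      simp
  -- invertibility consequences
  have hainj : ∀ v : Fin n → ℝ, Matrix.mulVec T v = 0 → v = 0 := by
    intro v hv
    have h1 := congrArg (fun w => Matrix.mulVec T⁻¹ w) hv
    simpa [Matrix.mulVec_mulVec, Matrix.nonsing_inv_mul T hTinv] using h1
  -- linear independence in usable form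
  have hpair : ∀ x y : ℝ, x • a + y • b = 0 → x = 0 ∧ y = 0 := by
    intro x y hxy
    have h2 := Fintype.linearIndependent_iff.mp hli ![x, y] (by
      rw [Fin.sum_univ_two]
      simpa using hxy)
    exact ⟨h2 0, h2 1⟩
  -- row computations for tails
  have hrow : ∀ (u : Fin (n+1) → ℝ) (U : ℕ → ℝ), (∀ m (h : m < n+1), U m = u ⟨m, h⟩) →
      ∀ iF : Fin n, Matrix.mulVec T (fun j : Fin n => u j.succ) iF
        = ∑ p ∈ Finset.Icc 1 n, t ((iF.val:ℤ) + 1 - p) * U p := by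
    intro u U hU iF
    simp only [Matrix.mulVec, dotProduct]
    have e : ∀ j : Fin n, T iF j * u j.succ
        = t ((iF.val:ℤ) + 1 - ((j.val + 1 : ℕ) : ℤ)) * U (j.val + 1) := by
      intro j
      rw [hTent iF j, hU (j.val + 1) (by have := j.isLt; omega)]
      have harg : ((iF.val:ℤ)) - (j.val:ℤ) = (iF.val:ℤ) + 1 - ((j.val + 1 : ℕ) : ℤ) := by
        push_cast; ring
      rw [harg]
      rfl
    rw [Finset.sum_congr rfl (fun j _ => e j)]
    rw [Fin.sum_univ_eq_sum_range (fun jv =>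
      t ((iF.val:ℤ) + 1 - ((jv + 1 : ℕ) : ℤ)) * U (jv + 1)) n]
    apply Finset.sum_nbij' (i := fun jv => jv + 1) (j := fun p => p - 1)
    · intro x hx; simp only [Finset.mem_range] at hx; simp only [Finset.mem_Icc]; omega
    · intro x hx; simp only [Finset.mem_Icc] at hx; simp only [Finset.mem_range]; omega
    · intro x hx; omega
    · intro x hx; simp only [Finset.mem_Icc] at hx; omega
    · intro x hx; rfl
  have hsmall : ∀ (u : Fin (n+1) → ℝ) (U : ℕ → ℝ)
      (hU : ∀ m (h : m < n+1), U m = u ⟨m, h⟩)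
      (hKU : ∀ r : ℤ, 1 ≤ r → r ≤ (n:ℤ) - 1 → ∑ p ∈ Finset.Icc 0 n, t (r - p) * U p = 0)
      (iF : Fin n), iF.val < n - 1 →
      Matrix.mulVec T (fun j : Fin n => u j.succ) iF = -(t ((iF.val:ℤ) + 1) * U 0) := by
    intro u U hU hKU iF hiF
    rw [hrow u U hU iF]
    have hk := hKU ((iF.val:ℤ) + 1) (by omega) (by omega)
    rw [sum_Icc_split (fun p => t ((iF.val:ℤ) + 1 - p) * U p) 0 0 n (by omega) (by omega)] at hk
    rw [Finset.Icc_self, Finset.sum_singleton] at hk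
    have e0 : t ((iF.val:ℤ) + 1 - ((0:ℕ):ℤ)) = t ((iF.val:ℤ) + 1) := by norm_num
    rw [e0] at hk
    rw [show (0:ℕ) + 1 = 1 from rfl] at hk
    linarith
  have hlastrow : ∀ (u : Fin (n+1) → ℝ) (U : ℕ → ℝ)
      (hU : ∀ m (h : m < n+1), U m = u ⟨m, h⟩),
      Matrix.mulVec T (fun j : Fin n => u j.succ) ⟨n-1, by omega⟩
        = ∑ p ∈ Finset.Icc 1 n, t ((n:ℤ) - p) * U p := by
    intro u U hU
    rw [hrow u U hU ⟨n-1, by omega⟩]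
    apply Finset.sum_congr rfl
    intro p hp
    congr 2
    simp
    omega
  have hA0 : A 0 = a 0 := hA 0 (by omega)
  have hB0 : B 0 = b 0 := hB 0 (by omega)
  refine ⟨c, ?_, ?_⟩
  · -- c ≠ 0
    intro hc0
    by_cases h00 : a 0 = 0 ∧ b 0 = 0
    · -- degenerate case : both first coordinates vanish
      set α : ℝ := Matrix.mulVec T (fun j : Fin n => a j.succ) ⟨n-1, by omega⟩ with hα
      set βv : ℝ := Matrix.mulVec T (fun j : Fin n => b j.succ) ⟨n-1, by omega⟩ with hβv
      have hz : Matrix.mulVec T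
          (βv • (fun j : Fin n => a j.succ) - α • (fun j : Fin n => b j.succ)) = 0 := by
        funext iF
        rw [Matrix.mulVec_sub, Matrix.mulVec_smul, Matrix.mulVec_smul]
        simp only [Pi.sub_apply, Pi.smul_apply, smul_eq_mul, Pi.zero_apply]
        by_cases hiF : iF.val < n - 1
        · rw [hsmall a A hA hKA iF hiF, hsmall b B hB hKB iF hiF]
          rw [hA0, hB0, h00.1, h00.2]
          ring
        · have hiF2 : iF = ⟨n-1, by omega⟩ := Fin.ext (by have := iF.isLt; simp; omega)
          rw [hiF2, ← hα, ← hβv]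
          ring
      have hz2 := hainj _ hz
      rw [sub_eq_zero] at hz2
      have hcomb : βv • a + (-α) • b = 0 := by
        funext x
        simp only [neg_smul, Pi.add_apply, Pi.neg_apply, Pi.smul_apply, smul_eq_mul,
          Pi.zero_apply, neg_mul]
        refine Fin.cases ?_ ?_ x
        · rw [h00.1, h00.2]; ring
        · intro j
          have := congrFun hz2 j
          simp only [Pi.smul_apply, smul_eq_mul] at this
          rw [this]; ring
      obtain ⟨hβ0, hα0⟩ := hpair βv (-α) hcomb
      have hα0' : α = 0 := by linarith [neg_eq_zero.mp hα0]
      have hTa : Matrix.mulVec T (fun j : Fin n => a j.succ) = 0 := by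
        funext iF
        by_cases hiF : iF.val < n - 1
        · rw [hsmall a A hA hKA iF hiF, hA0, h00.1]
          simp
        · have hiF2 : iF = ⟨n-1, by omega⟩ := Fin.ext (by have := iF.isLt; simp; omega)
          rw [hiF2, ← hα]
          simpa using hα0'
      have hta := hainj _ hTa
      have haz : a = 0 := by
        funext x
        refine Fin.cases ?_ ?_ x
        · exact h00.1
        · intro j; exact congrFun hta j
      obtain ⟨h1, _⟩ := hpair 1 0 (by rw [haz]; simp)
      exact one_ne_zero h1
    · -- main case
      have hz : Matrix.mulVec T
          ((a 0) • (fun j : Fin n => b j.succ) - (b 0) • (fun j : Fin n => a j.succ)) = 0 := by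
        funext iF
        rw [Matrix.mulVec_sub, Matrix.mulVec_smul, Matrix.mulVec_smul]
        simp only [Pi.sub_apply, Pi.smul_apply, smul_eq_mul, Pi.zero_apply]
        by_cases hiF : iF.val < n - 1
        · rw [hsmall a A hA hKA iF hiF, hsmall b B hB hKB iF hiF, hA0, hB0]
          ring
        · have hiF2 : iF = ⟨n-1, by omega⟩ := Fin.ext (by have := iF.isLt; simp; omega)
          rw [hiF2, hlastrow a A hA, hlastrow b B hB]
          have hcform : c = A 0 * (∑ p ∈ Finset.Icc 1 n, t ((n:ℤ) - p) * B p)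
              - B 0 * (∑ p ∈ Finset.Icc 1 n, t ((n:ℤ) - p) * A p) := by
            rw [hcdef, Finset.mul_sum, Finset.mul_sum, ← Finset.sum_sub_distrib]
            apply Finset.sum_congr rfl
            intro p _
            ring
          rw [hA0, hB0] at hcform
          rw [← hcform]
          exact hc0
      have hz2 := hainj _ hz
      rw [sub_eq_zero] at hz2
      have hcomb : (-(b 0)) • a + (a 0) • b = 0 := by
        funext x
        simp only [neg_smul, Pi.add_apply, Pi.neg_apply, Pi.smul_apply, smul_eq_mul,
          Pi.zero_apply, neg_mul]
        refine Fin.cases ?_ ?_ x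
        · ring
        · intro j
          have h3 := congrFun hz2 j
          simp only [Pi.smul_apply, smul_eq_mul] at h3
          linarith
      obtain ⟨h1, h2⟩ := hpair (-(b 0)) (a 0) hcomb
      exact h00 ⟨h2, neg_eq_zero.mp h1⟩
  · -- conclusion
    have h1 : T⁻¹ * (T * BT n a b) = T⁻¹ * (c • (1 : Matrix (Fin n) (Fin n) ℝ)) := by
      rw [hmul]
    rw [← Matrix.mul_assoc, Matrix.nonsing_inv_mul T hTinv, Matrix.one_mul] at h1
    rw [h1, Matrix.mul_smul, Matrix.mul_one]
end
end

section
/- Let n ≥ 2 and let u, v ∈ ℝ^{n+1} with u₁, u_{n+1}, v₁, v_{n+1} all nonzero, and suppose the associated polynomials u(λ) = u₁ + u₂λ + ⋯ + u_{n+1}λⁿ and v(λ) = v₁ + v₂λ + ⋯ + v_{n+1}λⁿ are coprime in ℝ[λ]. Then the Toeplitz Bezoutian B_T(u,v) is invertible, and for every integer k, B_T(u,v)·C_t(u)^k·B_T(u,v)⁻¹ = C_r(u)^k and B_T(u,v)·C_t(v)^k·B_T(u,v)⁻¹ = C_r(v)^k. -/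
open Matrix Polynomial

noncomputable section

def Dm (n m : ℕ) (u : Fin (n + 1) → ℝ) : Matrix (Fin n) (Fin n) ℝ :=
  Matrix.of fun i j =>
    (if h : n - m ≤ j.val ∧ j.val - (n - m) ≤ i.val then
        u ⟨n - m + i.val - j.val, by have := i.isLt; have := j.isLt; omega⟩ else 0)
    - (if h : m ≤ i.val ∧ i.val - m ≤ j.val then
        u ⟨n - m + i.val - j.val, by have := i.isLt; have := j.isLt; omega⟩ else 0)

lemma sum_if_val {n : ℕ} (c : ℕ) (f : Fin n → ℝ) :
    (∑ k : Fin n, if (k : ℕ) = c then f k else 0) = if h : c < n then f ⟨c, h⟩ else 0 := by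
  by_cases h : c < n
  · rw [dif_pos h, Finset.sum_eq_single ⟨c, h⟩]
    · simp
    · intro k _ hk
      rw [if_neg]
      intro hkc
      exact hk (Fin.ext hkc)
    · simp
  · rw [dif_neg h, Finset.sum_eq_zero]
    intro k _
    rw [if_neg]
    have := k.isLt
    omega

lemma ucong {n : ℕ} (u : Fin (n + 1) → ℝ) {a b : ℕ} {ha : a < n + 1} {hb : b < n + 1}
    (h : a = b) : u ⟨a, ha⟩ = u ⟨b, hb⟩ := congrArg u (Fin.ext h)

lemma DmSucc (n : ℕ) (u : Fin (n + 1) → ℝ) (hun : u (Fin.last n) ≠ 0) (m : ℕ) (hm : m < n) :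
    Dm n m u * Ct n u = Dm n (m + 1) u := by
  ext i j
  rw [Matrix.mul_apply]
  have hsum : ∀ k : Fin n, Dm n m u i k * Ct n u k j
      = (if (k : ℕ) = 0 then Dm n m u i k * (-u ⟨n - 1 - j.val, by omega⟩ / u (Fin.last n)) else 0)
        + (if (k : ℕ) = j.val + 1 then Dm n m u i k else 0) := by
    intro k
    show Dm n m u i k * (if (k:ℕ) = 0 then _ else if j.val + 1 = (k:ℕ) then 1 else 0) = _
    by_cases hk0 : (k : ℕ) = 0
    · rw [if_pos hk0, if_pos hk0, if_neg (by omega), add_zero]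
    · rw [if_neg hk0, if_neg hk0, zero_add]
      by_cases hkj : (j : ℕ) + 1 = (k : ℕ)
      · rw [if_pos hkj, if_pos (by omega), mul_one]
      · rw [if_neg hkj, if_neg (by omega), mul_zero]
  rw [Finset.sum_congr rfl fun k _ => hsum k, Finset.sum_add_distrib, sum_if_val, sum_if_val,
    dif_pos (show 0 < n by omega)]
  simp only [Dm, Matrix.of_apply, Fin.val_mk]
  rw [dif_neg (by omega)]
  have hc : ∀ h : n - 1 - j.val < n + 1,
      -u (Fin.last n) * (-u (⟨n - 1 - j.val, h⟩ : Fin (n+1)) / u (Fin.last n))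
      = u ⟨n - 1 - j.val, h⟩ := fun h => by
    rw [neg_div, neg_mul_neg, mul_comm, div_mul_cancel₀ _ hun]
  by_cases hbn : j.val + 1 < n
  · rw [dif_pos hbn]
    by_cases ham : i.val = m
    · rw [dif_pos (show m ≤ (i:ℕ) ∧ (i:ℕ) - m ≤ 0 by omega)]
      rw [show (⟨n - m + (i:ℕ) - 0, by omega⟩ : Fin (n+1)) = Fin.last n from
        Fin.ext (by simp [Fin.last]; omega)]
      rw [zero_sub, hc,
        dif_pos (show m ≤ (i:ℕ) ∧ (i:ℕ) - m ≤ (j:ℕ) + 1 by omega),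
        dif_neg (show ¬(m + 1 ≤ (i:ℕ) ∧ (i:ℕ) - (m+1) ≤ (j:ℕ)) by omega), sub_zero]
      by_cases hchi : n - m ≤ (j:ℕ) + 1 ∧ (j:ℕ) + 1 - (n - m) ≤ (i:ℕ)
      · rw [dif_pos hchi, dif_pos (show n - (m+1) ≤ (j:ℕ) ∧ (j:ℕ) - (n - (m+1)) ≤ (i:ℕ) by omega)]
        rw [show (u ⟨n - m + (i:ℕ) - ((j:ℕ)+1), by omega⟩ : ℝ)
            = u ⟨n - 1 - (j:ℕ), by omega⟩ from ucong u (by omega)]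
        rw [show (u ⟨n - (m+1) + (i:ℕ) - (j:ℕ), by omega⟩ : ℝ)
            = u ⟨n - 1 - (j:ℕ), by omega⟩ from ucong u (by omega)]
        ring
      · rw [dif_neg hchi, dif_neg (show ¬(n - (m+1) ≤ (j:ℕ) ∧ (j:ℕ) - (n - (m+1)) ≤ (i:ℕ)) by omega)]
        rw [show (u ⟨n - m + (i:ℕ) - ((j:ℕ)+1), by omega⟩ : ℝ)
            = u ⟨n - 1 - (j:ℕ), by omega⟩ from ucong u (by omega)]
        ring
    · rw [dif_neg (show ¬(m ≤ (i:ℕ) ∧ (i:ℕ) - m ≤ 0) by omega), sub_zero, zero_mul, zero_add]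
      congr 1
      · exact dite_congr (propext (by omega)) (fun h => ucong u (by omega)) (fun h => rfl)
      · exact dite_congr (propext (by omega)) (fun h => ucong u (by omega)) (fun h => rfl)
  · rw [dif_neg hbn, add_zero]
    by_cases ham : i.val = m
    · rw [dif_pos (show m ≤ (i:ℕ) ∧ (i:ℕ) - m ≤ 0 by omega)]
      rw [show (⟨n - m + (i:ℕ) - 0, by omega⟩ : Fin (n+1)) = Fin.last n from
        Fin.ext (by simp [Fin.last]; omega)]
      rw [zero_sub, hc,
        dif_pos (show n - (m+1) ≤ (j:ℕ) ∧ (j:ℕ) - (n - (m+1)) ≤ (i:ℕ) by omega),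
        dif_neg (show ¬(m + 1 ≤ (i:ℕ) ∧ (i:ℕ) - (m+1) ≤ (j:ℕ)) by omega), sub_zero]
      exact ucong u (by omega)
    · rw [dif_neg (show ¬(m ≤ (i:ℕ) ∧ (i:ℕ) - m ≤ 0) by omega), sub_zero, zero_mul]
      by_cases hmi : m + 1 ≤ (i:ℕ)
      · rw [dif_pos (show n - (m+1) ≤ (j:ℕ) ∧ (j:ℕ) - (n - (m+1)) ≤ (i:ℕ) by omega),
          dif_pos (show m + 1 ≤ (i:ℕ) ∧ (i:ℕ) - (m+1) ≤ (j:ℕ) by omega), sub_self]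
      · rw [dif_neg (show ¬(n - (m+1) ≤ (j:ℕ) ∧ (j:ℕ) - (n - (m+1)) ≤ (i:ℕ)) by omega),
          dif_neg (show ¬(m + 1 ≤ (i:ℕ) ∧ (i:ℕ) - (m+1) ≤ (j:ℕ)) by omega), sub_self]

lemma Dzero (n : ℕ) (u : Fin (n + 1) → ℝ) : Dm n 0 u = -(Uminus n u) := by
  ext i j
  simp only [Dm, Uminus, Matrix.of_apply, Matrix.neg_apply]
  rw [dif_neg (by omega), zero_sub, neg_inj]
  exact dite_congr (propext (by omega)) (fun h => ucong u (by omega)) (fun h => rfl)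

lemma DmEq (n : ℕ) (u : Fin (n + 1) → ℝ) (hun : u (Fin.last n) ≠ 0) :
    ∀ m : ℕ, m ≤ n → Dm n m u = -(Uminus n u) * Ct n u ^ m := by
  intro m
  induction m with
  | zero => intro _; rw [pow_zero, mul_one, Dzero]
  | succ m ih =>
      intro hm
      rw [← DmSucc n u hun m (by omega), ih (by omega), pow_succ, mul_assoc]

def Em (n m : ℕ) : Matrix (Fin n) (Fin n) ℝ :=
  Matrix.of fun i j => if i.val ≤ j.val ∧ n + i.val = m + j.val then 1 else 0

def Fm (n m : ℕ) : Matrix (Fin n) (Fin n) ℝ :=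
  Matrix.of fun i j => if i.val = m + j.val then 1 else 0

lemma Uminus_decomp (n : ℕ) (v : Fin (n + 1) → ℝ) :
    Uminus n v = ∑ m : Fin (n + 1), v m • Em n m := by
  ext i j
  simp only [Matrix.sum_apply, Matrix.smul_apply, Em, Matrix.of_apply, Uminus, smul_eq_mul,
    mul_ite, mul_one, mul_zero]
  by_cases h : i.val ≤ j.val
  · have hcongr : ∀ m : Fin (n + 1),
        (if i.val ≤ j.val ∧ n + i.val = (m:ℕ) + j.val then v m else 0)
          = (if (m:ℕ) = n + i.val - j.val then v m else 0) :=
      fun m => if_congr (by omega) rfl rfl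
    rw [dif_pos h, Finset.sum_congr rfl fun m _ => hcongr m, sum_if_val, dif_pos (by omega)]
  · rw [dif_neg h, Finset.sum_eq_zero]
    intro m _
    rw [if_neg (by omega)]

lemma Uplus_decomp (n : ℕ) (v : Fin (n + 1) → ℝ) :
    Uplus n v = ∑ m : Fin (n + 1), v m • Fm n m := by
  ext i j
  simp only [Matrix.sum_apply, Matrix.smul_apply, Fm, Matrix.of_apply, Uplus, smul_eq_mul,
    mul_ite, mul_one, mul_zero]
  by_cases h : j.val ≤ i.val
  · have hcongr : ∀ m : Fin (n + 1),
        (if i.val = (m:ℕ) + j.val then v m else 0)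
          = (if (m:ℕ) = i.val - j.val then v m else 0) :=
      fun m => if_congr (by omega) rfl rfl
    rw [if_pos h, Finset.sum_congr rfl fun m _ => hcongr m, sum_if_val, dif_pos (by omega)]
  · rw [if_neg h, Finset.sum_eq_zero]
    intro m _
    rw [if_neg (by omega)]

lemma DmFact (n : ℕ) (u : Fin (n + 1) → ℝ) (m : ℕ) (hm : m ≤ n) :
    Uplus n u * Em n m - Fm n m * Uminus n u = Dm n m u := by
  ext i j
  rw [Matrix.sub_apply, Matrix.mul_apply, Matrix.mul_apply]
  have h1 : (∑ k : Fin n, Uplus n u i k * Em n m k j)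
      = (if h : n - m ≤ j.val ∧ j.val - (n - m) ≤ i.val then
          u ⟨n - m + i.val - j.val, by have := i.isLt; have := j.isLt; omega⟩ else 0) := by
    by_cases hmj : n ≤ m + j.val
    · rw [Finset.sum_congr rfl fun k _ => by
        rw [show (Em n m k j : ℝ) = if (k:ℕ) = m + j.val - n then 1 else 0 from by
          simp only [Em, Matrix.of_apply]
          exact if_congr (by omega) rfl rfl, mul_ite, mul_one, mul_zero],
        sum_if_val, dif_pos (by omega)]
      simp only [Uplus, Matrix.of_apply]
      by_cases hki : m + j.val - n ≤ i.val
      · rw [if_pos hki, dif_pos (by omega)]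
        exact ucong u (by omega)
      · rw [if_neg hki, dif_neg (by omega)]
    · rw [Finset.sum_eq_zero, dif_neg (by omega)]
      intro k _
      rw [show (Em n m k j : ℝ) = 0 from by
        simp only [Em, Matrix.of_apply]; rw [if_neg (by omega)], mul_zero]
  have h2 : (∑ k : Fin n, Fm n m i k * Uminus n u k j)
      = (if h : m ≤ i.val ∧ i.val - m ≤ j.val then
          u ⟨n - m + i.val - j.val, by have := i.isLt; have := j.isLt; omega⟩ else 0) := by
    by_cases hmi : m ≤ i.val
    · rw [Finset.sum_congr rfl fun k _ => by
        rw [show (Fm n m i k : ℝ) = if (k:ℕ) = i.val - m then 1 else 0 from by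
          simp only [Fm, Matrix.of_apply]
          exact if_congr (by omega) rfl rfl, ite_mul, one_mul, zero_mul],
        sum_if_val, dif_pos (by omega)]
      simp only [Uminus, Matrix.of_apply]
      by_cases hkj : i.val - m ≤ j.val
      · rw [dif_pos hkj, dif_pos (by omega)]
        exact ucong u (by omega)
      · rw [dif_neg hkj, dif_neg (by omega)]
    · rw [Finset.sum_eq_zero, dif_neg (by omega)]
      intro k _
      rw [show (Fm n m i k : ℝ) = 0 from by
        simp only [Fm, Matrix.of_apply]; rw [if_neg (by omega)], zero_mul]
  rw [h1, h2]
  rfl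

lemma BT_eq (n : ℕ) (u v : Fin (n + 1) → ℝ) :
    BT n u v = ∑ m : Fin (n + 1), v m • Dm n (m : ℕ) u := by
  rw [BT, Uminus_decomp n v, Uplus_decomp n v, Matrix.mul_sum, Matrix.sum_mul,
    ← Finset.sum_sub_distrib]
  refine Finset.sum_congr rfl fun m _ => ?_
  rw [Matrix.mul_smul, Matrix.smul_mul, ← smul_sub, DmFact n u (m : ℕ) (by omega)]

lemma BT_fact (n : ℕ) (u v : Fin (n + 1) → ℝ) (hun : u (Fin.last n) ≠ 0) :
    BT n u v = -(Uminus n u * ∑ m : Fin (n + 1), v m • Ct n u ^ (m : ℕ)) := by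
  rw [BT_eq, Matrix.mul_sum, ← Finset.sum_neg_distrib]
  refine Finset.sum_congr rfl fun m _ => ?_
  rw [DmEq n u hun (m : ℕ) (by omega), neg_mul, Matrix.mul_smul, smul_neg]

lemma CrUm (n : ℕ) (u : Fin (n + 1) → ℝ) (hun : u (Fin.last n) ≠ 0) :
    Cr n u * Uminus n u = Uminus n u * Ct n u := by
  ext i j
  have hn : 0 < n := i.pos
  rw [Matrix.mul_apply, Matrix.mul_apply]
  -- LHS
  have hsumL : ∀ k : Fin n, Cr n u i k * Uminus n u k j
      = (if (k : ℕ) = n - 1 then (-u ⟨i.val, by omega⟩ / u (Fin.last n)) * Uminus n u k j else 0)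
        + (if (k : ℕ) = i.val - 1 ∧ 1 ≤ i.val then Uminus n u k j else 0) := by
    intro k
    show (if (k:ℕ) = n - 1 then _ else if (i:ℕ) = (k:ℕ) + 1 then 1 else 0) * Uminus n u k j = _
    by_cases hk0 : (k : ℕ) = n - 1
    · rw [if_pos hk0, if_pos hk0, if_neg (by omega), add_zero]
    · rw [if_neg hk0, if_neg hk0, zero_add]
      by_cases hkj : (i : ℕ) = (k : ℕ) + 1
      · rw [if_pos hkj, if_pos (by omega), one_mul]
      · rw [if_neg hkj, if_neg (by omega), zero_mul]
  have hsumR : ∀ k : Fin n, Uminus n u i k * Ct n u k j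
      = (if (k : ℕ) = 0 then Uminus n u i k * (-u ⟨n - 1 - j.val, by omega⟩ / u (Fin.last n)) else 0)
        + (if (k : ℕ) = j.val + 1 then Uminus n u i k else 0) := by
    intro k
    show Uminus n u i k * (if (k:ℕ) = 0 then _ else if (j:ℕ) + 1 = (k:ℕ) then 1 else 0) = _
    by_cases hk0 : (k : ℕ) = 0
    · rw [if_pos hk0, if_pos hk0, if_neg (by omega), add_zero]
    · rw [if_neg hk0, if_neg hk0, zero_add]
      by_cases hkj : (j : ℕ) + 1 = (k : ℕ)
      · rw [if_pos hkj, if_pos (by omega), mul_one]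
      · rw [if_neg hkj, if_neg (by omega), mul_zero]
  rw [Finset.sum_congr rfl fun k _ => hsumL k, Finset.sum_congr rfl fun k _ => hsumR k,
    Finset.sum_add_distrib, Finset.sum_add_distrib, sum_if_val, sum_if_val,
    dif_pos (show n - 1 < n by omega), dif_pos (show (0:ℕ) < n by omega)]
  by_cases h1i : 1 ≤ i.val
  · have hsplit : ∀ k : Fin n, (if (k : ℕ) = i.val - 1 ∧ 1 ≤ i.val then Uminus n u k j else 0)
        = (if (k : ℕ) = i.val - 1 then Uminus n u k j else 0) :=
      fun k => if_congr (by omega) rfl rfl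
    rw [Finset.sum_congr rfl fun k _ => hsplit k, sum_if_val, sum_if_val,
      dif_pos (show i.val - 1 < n by omega)]
    simp only [Uminus, Matrix.of_apply, Fin.val_mk]
    rw [dif_neg (show ¬ i.val ≤ 0 by omega), zero_mul, zero_add]
    by_cases hjn : j.val = n - 1
    · rw [dif_pos (show n - 1 ≤ j.val by omega), dif_pos (show i.val - 1 ≤ j.val by omega),
        dif_neg (show ¬ j.val + 1 < n by omega),
        show (⟨n + (n-1) - j.val, by omega⟩ : Fin (n+1)) = Fin.last n from
          Fin.ext (by simp [Fin.last]; omega),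
        div_mul_cancel₀ _ hun,
        show (u ⟨n + (i.val - 1) - j.val, by omega⟩ : ℝ) = u ⟨i.val, by omega⟩ from
          ucong u (by omega)]
      ring
    · rw [dif_neg (show ¬ n - 1 ≤ j.val by omega), mul_zero, zero_add,
        dif_pos (show j.val + 1 < n by omega)]
      exact dite_congr (propext (by omega)) (fun h => ucong u (by omega)) (fun h => rfl)
  · rw [Finset.sum_eq_zero fun k _ => if_neg (by omega), add_zero, sum_if_val]
    simp only [Uminus, Matrix.of_apply, Fin.val_mk]
    rw [dif_pos (show i.val ≤ 0 by omega),
      show (⟨n + i.val - 0, by omega⟩ : Fin (n+1)) = Fin.last n from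
        Fin.ext (by simp [Fin.last]; omega)]
    by_cases hjn : j.val = n - 1
    · rw [dif_pos (show n - 1 ≤ j.val by omega), dif_neg (show ¬ j.val + 1 < n by omega),
        add_zero,
        show (⟨n + (n-1) - j.val, by omega⟩ : Fin (n+1)) = Fin.last n from
          Fin.ext (by simp [Fin.last]; omega),
        div_mul_cancel₀ _ hun, neg_div, mul_neg, mul_comm (u (Fin.last n)),
        div_mul_cancel₀ _ hun,
        show (u ⟨n - 1 - j.val, by omega⟩ : ℝ) = u ⟨i.val, by omega⟩ from ucong u (by omega)]
    · rw [dif_neg (show ¬ n - 1 ≤ j.val by omega), mul_zero,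
        dif_pos (show j.val + 1 < n by omega), dif_pos (show i.val ≤ j.val + 1 by omega),
        neg_div, mul_neg, mul_comm (u (Fin.last n)), div_mul_cancel₀ _ hun,
        show (u ⟨n + i.val - (j.val + 1), by omega⟩ : ℝ) = u ⟨n - 1 - j.val, by omega⟩ from
          ucong u (by omega)]
      ring

lemma aeval_polyOf (n : ℕ) (u : Fin (n + 1) → ℝ) (M : Matrix (Fin n) (Fin n) ℝ) :
    Polynomial.aeval M (polyOf u) = ∑ m : Fin (n + 1), u m • M ^ (m : ℕ) := by
  rw [polyOf, map_sum]
  refine Finset.sum_congr rfl fun m _ => ?_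
  rw [_root_.map_mul, Polynomial.aeval_C, Polynomial.aeval_X_pow, ← Algebra.smul_def]

lemma Uminus_blockTriangular (n : ℕ) (u : Fin (n + 1) → ℝ) :
    (Uminus n u).BlockTriangular id := by
  intro i j hij
  simp only [id_eq] at hij
  simp only [Uminus, Matrix.of_apply]
  rw [dif_neg (by omega)]

lemma Uminus_det (n : ℕ) (u : Fin (n + 1) → ℝ) (hun : u (Fin.last n) ≠ 0) :
    IsUnit (Uminus n u).det := by
  rw [Matrix.det_of_upperTriangular (Uminus_blockTriangular n u)]
  have : ∀ i : Fin n, Uminus n u i i = u (Fin.last n) := by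
    intro i
    simp only [Uminus, Matrix.of_apply]
    rw [dif_pos le_rfl]
    exact congrArg u (Fin.ext (by simp only [Fin.last]; omega))
  rw [Finset.prod_congr rfl fun i _ => this i, Finset.prod_const]
  exact (isUnit_iff_ne_zero.mpr (pow_ne_zero _ hun))

lemma cayley_Ct (n : ℕ) (u : Fin (n + 1) → ℝ) (hun : u (Fin.last n) ≠ 0) :
    (∑ m : Fin (n + 1), u m • Ct n u ^ (m : ℕ)) = 0 := by
  have h0 : BT n u u = 0 := sub_self _
  rw [BT_fact n u u hun, neg_eq_zero] at h0
  have := congrArg (fun M => (Uminus n u)⁻¹ * M) h0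
  simpa [← Matrix.mul_assoc, Matrix.nonsing_inv_mul _ (Uminus_det n u hun)] using this

lemma Ct_det_isUnit (n : ℕ) (u : Fin (n + 1) → ℝ) (hu1 : u 0 ≠ 0)
    (hun : u (Fin.last n) ≠ 0) : IsUnit (Ct n u).det := by
  have h := cayley_Ct n u hun
  rw [Fin.sum_univ_succ] at h
  have h2 : Ct n u * ∑ i : Fin n, u i.succ • Ct n u ^ (i : ℕ)
      = ∑ i : Fin n, u i.succ • Ct n u ^ ((i.succ : Fin (n+1)) : ℕ) := by
    rw [Matrix.mul_sum]
    refine Finset.sum_congr rfl fun i _ => ?_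
    rw [Matrix.mul_smul, Fin.val_succ, pow_succ']
  have h3 : Ct n u * ((-(u 0)⁻¹) • ∑ i : Fin n, u i.succ • Ct n u ^ (i : ℕ)) = 1 := by
    rw [Matrix.mul_smul, h2]
    have h4 : (∑ i : Fin n, u i.succ • Ct n u ^ ((i.succ : Fin (n+1)) : ℕ)) = -(u 0 • 1) := by
      have := h
      simp only [Fin.val_zero, pow_zero] at this
      linear_combination (norm := module) this
    rw [h4, smul_neg, neg_smul, neg_neg, smul_smul, inv_mul_cancel₀ hu1, one_smul]
  exact IsUnit.of_mul_eq_one _ (by rw [← Matrix.det_mul, h3, Matrix.det_one])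

lemma intertwine (n : ℕ) (u v : Fin (n + 1) → ℝ) (hun : u (Fin.last n) ≠ 0) :
    BT n u v * Ct n u = Cr n u * BT n u v := by
  set S := ∑ m : Fin (n + 1), v m • Ct n u ^ (m : ℕ) with hS
  have hcomm : S * Ct n u = Ct n u * S := by
    rw [hS, Finset.sum_mul, Matrix.mul_sum]
    refine Finset.sum_congr rfl fun m _ => ?_
    rw [Matrix.smul_mul, Matrix.mul_smul, ← pow_succ, ← pow_succ']
  rw [BT_fact n u v hun, ← hS, neg_mul, Matrix.mul_assoc, hcomm, ← Matrix.mul_assoc,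
    ← CrUm n u hun, mul_neg, Matrix.mul_assoc]

/-- For coprime `u(λ)`, `v(λ)` the Toeplitz Bezoutian is invertible and conjugates
`C_t(u)^k` to `C_r(u)^k` and `C_t(v)^k` to `C_r(v)^k` for all integers `k`. -/
theorem toeplitz_bezoutian_similarity
    (n : ℕ) (hn : 2 ≤ n) (u v : Fin (n + 1) → ℝ)
    (hu1 : u 0 ≠ 0) (hun : u (Fin.last n) ≠ 0)
    (hv1 : v 0 ≠ 0) (hvn : v (Fin.last n) ≠ 0)
    (hcop : IsCoprime (polyOf u) (polyOf v)) :
    IsUnit (BT n u v).det ∧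
      ∀ k : ℤ, BT n u v * Ct n u ^ k * (BT n u v)⁻¹ = Cr n u ^ k ∧
        BT n u v * Ct n v ^ k * (BT n u v)⁻¹ = Cr n v ^ k := by
  have hBfact : BT n u v = -(Uminus n u * Polynomial.aeval (Ct n u) (polyOf v)) := by
    rw [aeval_polyOf]; exact BT_fact n u v hun
  obtain ⟨a, b, hab⟩ := hcop
  have h0 : Polynomial.aeval (Ct n u) (polyOf u) = 0 := by
    rw [aeval_polyOf]; exact cayley_Ct n u hun
  have hone : Polynomial.aeval (Ct n u) b * Polynomial.aeval (Ct n u) (polyOf v) = 1 := by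
    have h := congrArg (Polynomial.aeval (Ct n u)) hab
    simpa [map_add, _root_.map_mul, _root_.map_one, h0] using h
  have hone' : Polynomial.aeval (Ct n u) (polyOf v) * Polynomial.aeval (Ct n u) b = 1 := by
    rw [← _root_.map_mul, mul_comm, _root_.map_mul, hone]
  have hSunit : IsUnit (Polynomial.aeval (Ct n u) (polyOf v)) := ⟨⟨_, _, hone', hone⟩, rfl⟩
  have hSdet : IsUnit (Polynomial.aeval (Ct n u) (polyOf v)).det :=
    (Matrix.isUnit_iff_isUnit_det _).mp hSunit
  have hBdet : IsUnit (BT n u v).det := by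
    rw [hBfact, Matrix.det_neg, Matrix.det_mul]
    exact (isUnit_one.neg.pow _).mul ((Uminus_det n u hun).mul hSdet)
  have key : ∀ X Y : Matrix (Fin n) (Fin n) ℝ, SemiconjBy (BT n u v) X Y → IsUnit X.det →
      ∀ k : ℤ, BT n u v * X ^ k * (BT n u v)⁻¹ = Y ^ k := by
    intro X Y hsc hX k
    have hY : IsUnit Y.det := by
      have hd := congrArg Matrix.det hsc.eq
      rw [Matrix.det_mul, Matrix.det_mul, mul_comm (Y.det)] at hd
      have h2 : X.det = Y.det := mul_left_cancel₀ hBdet.ne_zero hd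
      rwa [← h2]
    have hz := Matrix.SemiconjBy.zpow_right hX hY hsc k
    rw [hz.eq, Matrix.mul_assoc, Matrix.mul_nonsing_inv _ hBdet, mul_one]
  refine ⟨hBdet, fun k => ⟨?_, ?_⟩⟩
  · exact key _ _ (intertwine n u v hun) (Ct_det_isUnit n u hu1 hun) k
  · refine key _ _ ?_ (Ct_det_isUnit n v hv1 hvn) k
    have hswap : BT n u v = -(BT n v u) := (neg_sub _ _).symm
    show BT n u v * Ct n v = Cr n v * BT n u v
    rw [hswap, neg_mul, intertwine n v u hvn, mul_neg]
end
end

section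
/- Let n ≥ 2, let u = (u₁,…,u_{n+1}) ∈ ℝ^{n+1} with u₁ ≠ 0 and u_{n+1} ≠ 0, let A be an invertible n×n real matrix, and let s ≥ t be integers with r = s − t > 0. Let M be the n×(n+r) real matrix whose first n columns form the matrix A·C_r(u)^t and whose (n+i)-th column, for each 1 ≤ i ≤ r, equals the last column of A·C_r(u)^{t+i}. Then M has rank n, and the vectors e₁,…,e_r form a basis of the kernel of M, where e_i ∈ ℝ^{n+r} is the vector with (e_i)_{i+m−1} = u_m for 1 ≤ m ≤ n+1 and all other entries zero. In particular M·e_i = 0 for each i. -/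
open Matrix Polynomial

noncomputable section

section AuxToeplitz

lemma sum_ite_val {n : ℕ} {c : ℕ} (hc : c < n) (f : Fin n → ℝ) :
    (∑ j : Fin n, if j.val = c then f j else 0) = f ⟨c, hc⟩ := by
  rw [Finset.sum_eq_single (⟨c, hc⟩ : Fin n)]
  · simp
  · intro b _ hb
    rw [if_neg]
    simpa [Fin.ext_iff] using hb
  · simp

lemma Cr_col_shift {n : ℕ} (u : Fin (n+1) → ℝ) (a b : Fin n) (hb : b.val = a.val + 1) :
    (Cr n u).mulVec (Pi.single a 1) = Pi.single b 1 := by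
  funext i
  have hbn := b.isLt
  rw [Matrix.mulVec_single]
  simp only [Pi.smul_apply, Matrix.col_apply, op_smul_eq_mul, Cr, Matrix.of_apply, mul_one, Pi.single_apply]
  have ha : ¬ a.val = n - 1 := by omega
  rw [if_neg ha]
  simp [Fin.ext_iff, hb]

lemma Cr_col_last {n : ℕ} (u : Fin (n+1) → ℝ) (hn : 1 ≤ n) :
    (Cr n u).mulVec (Pi.single (⟨n-1, by omega⟩ : Fin n) 1)
      = fun i => -u ⟨i.val, by have := i.isLt; omega⟩ / u (Fin.last n) := by
  funext i
  rw [Matrix.mulVec_single]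
  simp [Cr]

lemma Cr_mul_Cl {n : ℕ} (u : Fin (n+1) → ℝ) (hn : 1 ≤ n) (hu1 : u 0 ≠ 0) (hun : u (Fin.last n) ≠ 0) :
    Cr n u * Cl n u = 1 := by
  ext i k
  rw [Matrix.mul_apply]
  have hi := i.isLt
  have hk := k.isLt
  have hdec : ∀ j : Fin n, Cr n u i j * Cl n u j k =
      (if j.val = n - 1 then (-u ⟨i.val, by omega⟩ / u (Fin.last n)) * Cl n u j k else 0)
      + (if j.val = i.val - 1 ∧ 1 ≤ i.val then Cl n u j k else 0) := by
    intro j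
    have hj := j.isLt
    simp only [Cr, Matrix.of_apply]
    by_cases h1 : j.val = n - 1
    · rw [if_pos h1, if_pos h1, if_neg (by omega), add_zero]
    · rw [if_neg h1, if_neg h1, zero_add]
      by_cases h2 : i.val = j.val + 1
      · rw [if_pos h2, if_pos (by omega), one_mul]
      · rw [if_neg h2, if_neg (by omega), zero_mul]
  rw [Finset.sum_congr rfl (fun j _ => hdec j), Finset.sum_add_distrib,
    sum_ite_val (by omega : n - 1 < n)]
  by_cases hi1 : 1 ≤ i.val
  · have h2 : (∑ j : Fin n, if j.val = i.val - 1 ∧ 1 ≤ i.val then Cl n u j k else 0)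
        = Cl n u ⟨i.val - 1, by omega⟩ k := by
      rw [← sum_ite_val (by omega : i.val - 1 < n) (fun j => Cl n u j k)]
      exact Finset.sum_congr rfl fun j _ => by simp [hi1]
    rw [h2]
    simp only [Cl, Matrix.of_apply, Matrix.one_apply]
    by_cases hk0 : k.val = 0
    · rw [if_pos hk0, if_pos hk0]
      simp only [Nat.sub_add_cancel hi1, Nat.sub_add_cancel (by omega : 1 ≤ n)]
      rw [if_neg (by simp [Fin.ext_iff]; omega : ¬ i = k)]
      have hl : (⟨n, by omega⟩ : Fin (n+1)) = Fin.last n := rfl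
      rw [hl]
      field_simp
      ring
    · rw [if_neg hk0, if_neg hk0, if_neg (by omega : ¬ (n-1) + 1 = k.val),
        mul_zero, zero_add, Nat.sub_add_cancel hi1]
      simp [Fin.ext_iff]
  · have h2 : (∑ j : Fin n, if j.val = i.val - 1 ∧ 1 ≤ i.val then Cl n u j k else 0) = 0 :=
      Finset.sum_eq_zero fun j _ => by rw [if_neg (by omega)]
    rw [h2, add_zero]
    simp only [Cl, Matrix.of_apply, Matrix.one_apply]
    by_cases hk0 : k.val = 0
    · rw [if_pos hk0]
      simp only [Nat.sub_add_cancel (by omega : 1 ≤ n)]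
      rw [if_pos (by simp [Fin.ext_iff]; omega : i = k)]
      have hl : (⟨n, by omega⟩ : Fin (n+1)) = Fin.last n := rfl
      have h0 : (⟨i.val, by omega⟩ : Fin (n+1)) = 0 := by ext; simpa using by omega
      rw [hl, h0]
      field_simp
    · rw [if_neg hk0, if_neg (by omega : ¬ (n-1) + 1 = k.val), mul_zero]
      rw [if_neg (by simp [Fin.ext_iff]; omega : ¬ i = k)]

lemma L1pos {n : ℕ} (u : Fin (n+1) → ℝ) (m : ℕ) (a b : Fin n) (hb : b.val = a.val + m) :
    ((Cr n u) ^ m).mulVec (Pi.single a 1) = Pi.single b 1 := by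
  induction m generalizing b with
  | zero =>
      have hba : b = a := by ext; omega
      subst hba
      rw [pow_zero, Matrix.one_mulVec]
  | succ m ih =>
      have hb' := b.isLt
      have ham : a.val + m < n := by omega
      rw [pow_succ', ← Matrix.mulVec_mulVec, ih ⟨a.val + m, ham⟩ rfl,
        Cr_col_shift u ⟨a.val + m, ham⟩ b (by simp; omega)]

lemma L1neg {n : ℕ} (u : Fin (n+1) → ℝ) (hn : 1 ≤ n) (hdet : IsUnit (Cr n u).det) (m : ℕ) (hm : m ≤ n - 1) :
    ((Cr n u) ^ (-(m:ℤ))).mulVec (Pi.single (⟨n-1, by omega⟩ : Fin n) 1)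
      = Pi.single (⟨n-1-m, by omega⟩ : Fin n) 1 := by
  rw [← L1pos (u := u) m ⟨n-1-m, by omega⟩ ⟨n-1, by omega⟩ (by simp; omega),
    Matrix.mulVec_mulVec, ← zpow_natCast (Cr n u) m, ← Matrix.zpow_add hdet,
    neg_add_cancel, zpow_zero, Matrix.one_mulVec]

lemma Kprime {n : ℕ} (u : Fin (n+1) → ℝ) (hn : 2 ≤ n) (hun : u (Fin.last n) ≠ 0)
    (hdet : IsUnit (Cr n u).det) :
    ∑ m : Fin (n+1), u m • ((Cr n u ^ ((m.val : ℤ) - n + 1)).mulVec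
      (Pi.single (⟨n-1, by omega⟩ : Fin n) 1)) = 0 := by
  rw [Fin.sum_univ_castSucc]
  have hterm : ∀ m : Fin n, (Cr n u ^ (((m.castSucc.val : ℕ) : ℤ) - n + 1)).mulVec
      (Pi.single (⟨n-1, by omega⟩ : Fin n) 1) = Pi.single m 1 := by
    intro m
    have hm := m.isLt
    have h1 : ((m.castSucc.val : ℕ) : ℤ) - n + 1 = -((n - 1 - m.val : ℕ) : ℤ) := by
      have h2 : m.castSucc.val = m.val := rfl
      omega
    rw [h1, L1neg (u := u) (by omega) hdet (n-1-m.val) (by omega)]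
    have hx : (⟨n - 1 - (n - 1 - m.val), by omega⟩ : Fin n) = m := by
      ext; simp; omega
    rw [hx]
  have hlast : (((Fin.last n).val : ℕ) : ℤ) - n + 1 = 1 := by simp
  rw [hlast, zpow_one, Cr_col_last (u := u) (by omega)]
  funext p
  have hp := p.isLt
  simp only [Finset.sum_apply, Pi.add_apply, Pi.smul_apply, hterm, Pi.single_apply,
    smul_eq_mul, mul_ite, mul_one, mul_zero, Pi.zero_apply]
  rw [Finset.sum_ite_eq Finset.univ p (fun m => u m.castSucc)]
  simp only [Finset.mem_univ, if_true]
  have hcs : (⟨(p : ℕ), by omega⟩ : Fin (n+1)) = p.castSucc := rfl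
  rw [hcs]
  field_simp
  ring

lemma Kmain {n : ℕ} (u : Fin (n+1) → ℝ) (hn : 2 ≤ n) (hun : u (Fin.last n) ≠ 0)
    (hdet : IsUnit (Cr n u).det) :
    ∑ m : Fin (n+1), u m • ((Cr n u ^ ((m.val : ℤ))).mulVec
      (Pi.single (⟨n-1, by omega⟩ : Fin n) 1)) = 0 := by
  have h := congrArg (fun w => (Cr n u ^ ((n : ℤ) - 1)).mulVecLin w)
    (Kprime u hn hun hdet)
  simp only [map_sum, _root_.map_smul, map_zero, Matrix.mulVecLin_apply] at h
  rw [← h]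
  refine Finset.sum_congr rfl fun m _ => ?_
  congr 1
  rw [Matrix.mulVec_mulVec, ← Matrix.zpow_add hdet,
    show (n : ℤ) - 1 + ((m.val : ℤ) - n + 1) = (m.val : ℤ) by omega]

lemma entry_mul_single {n : ℕ} (X Y : Matrix (Fin n) (Fin n) ℝ) (j a : Fin n)
    (h : Y.mulVec (Pi.single j 1) = Pi.single a 1) (p : Fin n) :
    (X * Y) p j = X p a := by
  have h2 : ((X * Y).mulVec (Pi.single j 1)) p
      = (X.mulVec (Y.mulVec (Pi.single j 1))) p := by
    rw [Matrix.mulVec_mulVec]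
  rw [h] at h2
  simpa [Matrix.mulVec_single] using h2

lemma entry_mul_col {n : ℕ} (X Y : Matrix (Fin n) (Fin n) ℝ) (j : Fin n) (p : Fin n) :
    (X * Y) p j = (X.mulVec (Y.mulVec (Pi.single j 1))) p := by
  rw [Matrix.mulVec_mulVec]
  simp [Matrix.mulVec_single]

end AuxToeplitz

/-- Proposition (kernel of the horizontal Toeplitz extension): the extension matrix
`M = [A C_r(u)^t | β₁ | ⋯ | β_r]` has rank `n` and its kernel has the shifted copies
of `u` as a basis. -/
theorem toeplitz_extension_kernel
    (n : ℕ) (hn : 2 ≤ n)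
    (u : Fin (n + 1) → ℝ) (hu1 : u 0 ≠ 0) (hun : u (Fin.last n) ≠ 0)
    (A : Matrix (Fin n) (Fin n) ℝ) (hA : IsUnit A.det)
    (s t : ℤ) (r : ℕ) (hr : 0 < r) (hrst : (r : ℤ) = s - t)
    (M : Matrix (Fin n) (Fin (n + r)) ℝ)
    (hM : ∀ (p : Fin n) (q : Fin (n + r)),
      M p q = if h : q.val < n then (A * Cr n u ^ t) p ⟨q.val, h⟩
        else (A * Cr n u ^ (t + ((q.val - n + 1 : ℕ) : ℤ))) p ⟨n - 1, by omega⟩)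
    (e : Fin r → Fin (n + r) → ℝ)
    (he : ∀ (i : Fin r) (p : Fin (n + r)),
      e i p = if h : i.val ≤ p.val ∧ p.val ≤ i.val + n
        then u ⟨p.val - i.val, by omega⟩ else 0) :
    M.rank = n ∧ LinearIndependent ℝ e ∧
      Submodule.span ℝ (Set.range e) = LinearMap.ker M.mulVecLin ∧
      ∀ i : Fin r, M.mulVec (e i) = 0 := by
  have hdet : IsUnit (Cr n u).det :=
    Matrix.isUnit_det_of_right_inverse (Cr_mul_Cl u (by omega) hu1 hun)
  have hdetz : ∀ k : ℤ, (Cr n u) ^ k * (Cr n u) ^ (-k) = 1 := fun k => by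
    rw [← Matrix.zpow_add hdet, add_neg_cancel, zpow_zero]
  have hB : IsUnit (A * Cr n u ^ t).det := by
    rw [Matrix.det_mul]
    exact hA.mul (Matrix.isUnit_det_of_right_inverse (hdetz t))
  -- column formula
  have hcol : ∀ (q : Fin (n + r)) (p : Fin n),
      M p q = ((A * Cr n u ^ (t + (q.val : ℤ) - n + 1)) p ⟨n - 1, by omega⟩) := by
    intro q p
    rw [hM p q]
    by_cases h : q.val < n
    · rw [dif_pos h]
      rw [show t + (q.val : ℤ) - n + 1 = t + (-(((n - 1 - q.val : ℕ)) : ℤ)) from by omega,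
        Matrix.zpow_add hdet, ← Matrix.mul_assoc]
      refine (entry_mul_single _ _ _ ⟨q.val, h⟩ ?_ p).symm
      rw [L1neg u (by omega) hdet (n - 1 - q.val) (by omega)]
      have hx : (⟨n - 1 - (n - 1 - q.val), by omega⟩ : Fin n) = ⟨q.val, h⟩ := by
        ext; simp; omega
      rw [hx]
    · rw [dif_neg h]
      have hq := q.isLt
      have hE : Cr n u ^ (t + ((q.val - n + 1 : ℕ) : ℤ)) = Cr n u ^ (t + (q.val : ℤ) - n + 1) := by
        congr 1
        omega
      rw [hE]
  -- M kills each e i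
  have hMe : ∀ i : Fin r, M.mulVec (e i) = 0 := by
    intro i
    funext p
    have hi := i.isLt
    show (∑ q : Fin (n + r), M p q * e i q) = 0
    set g : Fin (n + 1) → Fin (n + r) :=
      fun m => ⟨i.val + m.val, by have := m.isLt; omega⟩ with hgdef
    have hsupp : ∀ q ∈ Finset.univ, q ∉ Finset.image g Finset.univ → M p q * e i q = 0 := by
      intro q _ hq
      have hcond : ¬ (i.val ≤ q.val ∧ q.val ≤ i.val + n) := by
        intro hc
        exact hq (Finset.mem_image.mpr ⟨⟨q.val - i.val, by omega⟩, Finset.mem_univ _,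
          by ext; simp [g]; omega⟩)
      rw [he i q, dif_neg hcond, mul_zero]
    rw [← Finset.sum_subset (Finset.subset_univ (Finset.image g Finset.univ)) hsupp]
    rw [Finset.sum_image (fun a _ b _ hab => by
      have := congrArg Fin.val hab
      simp [g] at this
      exact Fin.ext this)]
    have he2 : ∀ m : Fin (n + 1), e i (g m) = u m := by
      intro m
      rw [he]
      rw [dif_pos ⟨by simp [g], by have := m.isLt; simp [g]; omega⟩]
      congr 1
      ext
      simp [g]
    have hM2 : ∀ m : Fin (n + 1), M p (g m)
        = ((A * Cr n u ^ (t + (i.val : ℤ) - n + 1)).mulVec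
            ((Cr n u ^ ((m.val : ℤ))).mulVec (Pi.single (⟨n - 1, by omega⟩ : Fin n) 1))) p := by
      intro m
      rw [hcol (g m) p]
      rw [show t + ((g m).val : ℤ) - n + 1 = (t + (i.val : ℤ) - n + 1) + (m.val : ℤ) from by
        simp [g]; omega]
      rw [Matrix.zpow_add hdet, ← Matrix.mul_assoc]
      exact entry_mul_col _ _ _ _
    have hsum : (∑ m : Fin (n + 1), M p (g m) * e i (g m))
        = ((A * Cr n u ^ (t + (i.val : ℤ) - n + 1)).mulVecLin
            (∑ m : Fin (n + 1), u m • ((Cr n u ^ ((m.val : ℤ))).mulVec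
              (Pi.single (⟨n - 1, by omega⟩ : Fin n) 1)))) p := by
      rw [map_sum, Finset.sum_apply]
      refine Finset.sum_congr rfl fun m _ => ?_
      rw [he2 m, hM2 m, _root_.map_smul]
      simp [Matrix.mulVecLin_apply, mul_comm]
    rw [hsum, Kmain u hn hun hdet, map_zero]
    rfl
  -- rank
  have hsurj : Function.Surjective (M.mulVecLin) := by
    intro y
    refine ⟨fun q => if h : q.val < n then ((A * Cr n u ^ t)⁻¹.mulVec y) ⟨q.val, h⟩ else 0, ?_⟩
    rw [Matrix.mulVecLin_apply]
    funext p
    show (∑ q : Fin (n + r), M p q * _) = y p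
    rw [Fin.sum_univ_add]
    have hz : (∑ j : Fin r, M p (Fin.natAdd n j)
        * (if h : (Fin.natAdd n j).val < n then ((A * Cr n u ^ t)⁻¹.mulVec y) ⟨(Fin.natAdd n j).val, h⟩ else 0)) = 0 := by
      refine Finset.sum_eq_zero fun j _ => ?_
      rw [dif_neg (by simp [Fin.natAdd]), mul_zero]
    rw [hz, add_zero]
    have h1 : ∀ i : Fin n, M p (Fin.castAdd r i)
        * (if h : (Fin.castAdd r i).val < n then ((A * Cr n u ^ t)⁻¹.mulVec y) ⟨(Fin.castAdd r i).val, h⟩ else 0)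
        = (A * Cr n u ^ t) p i * ((A * Cr n u ^ t)⁻¹.mulVec y) i := by
      intro j
      rw [dif_pos (by simp [Fin.castAdd] : (Fin.castAdd r j).val < n), hM]
      rw [dif_pos (by simp [Fin.castAdd] : (Fin.castAdd r j).val < n)]
      rfl
    rw [Finset.sum_congr rfl fun j _ => h1 j]
    have : (∑ i : Fin n, (A * Cr n u ^ t) p i * ((A * Cr n u ^ t)⁻¹.mulVec y) i)
        = ((A * Cr n u ^ t) * (A * Cr n u ^ t)⁻¹).mulVec y p := by
      rw [← Matrix.mulVec_mulVec]
      rfl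
    rw [this, Matrix.mul_nonsing_inv _ hB, Matrix.one_mulVec]
  have hrank : M.rank = n := by
    rw [Matrix.rank, LinearMap.range_eq_top.mpr hsurj, finrank_top, Module.finrank_fin_fun]
  -- linear independence
  have hli : LinearIndependent ℝ e := by
    rw [Fintype.linearIndependent_iff]
    intro g hg
    have key : ∀ k : ℕ, ∀ i : Fin r, i.val = k → g i = 0 := by
      intro k
      induction k using Nat.strong_induction_on with
      | _ k ih =>
        intro i hik
        have hk : k < r := hik ▸ i.isLt
        have h0 := congrFun hg ⟨k, by omega⟩
        rw [Finset.sum_apply] at h0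
        have hterm : ∀ b : Fin r, b ∈ Finset.univ → b ≠ i →
            (g b • e b) (⟨k, by omega⟩ : Fin (n + r)) = 0 := by
          intro b _ hb
          have hbk : b.val ≠ k := fun hc => hb (Fin.ext (by omega))
          rcases Nat.lt_or_ge b.val k with hlt | hge
          · have := ih b.val hlt b rfl
            simp [this]
          · have hgt : k < b.val := by omega
            have : e b (⟨k, by omega⟩ : Fin (n + r)) = 0 := by
              rw [he, dif_neg (by simp; omega)]
            simp [this]
        rw [Finset.sum_eq_single i hterm (by simp)] at h0
        have hei : e i (⟨k, by omega⟩ : Fin (n + r)) = u 0 := by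
          rw [he, dif_pos ⟨by exact hik.le, by exact (show k ≤ i.val + n by omega)⟩]
          congr 1
          exact Fin.ext (by show k - i.val = 0; omega)
        rw [Pi.smul_apply, hei, smul_eq_mul] at h0
        exact (mul_eq_zero.mp h0).resolve_right hu1
    intro i
    exact key i.val i rfl
  -- span = kernel
  have hle : Submodule.span ℝ (Set.range e) ≤ LinearMap.ker M.mulVecLin := by
    rw [Submodule.span_le]
    rintro _ ⟨i, rfl⟩
    simp [LinearMap.mem_ker, Matrix.mulVecLin_apply, hMe i]
  have hker : Module.finrank ℝ (LinearMap.ker M.mulVecLin) = r := by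
    have h1 := LinearMap.finrank_range_add_finrank_ker M.mulVecLin
    rw [Module.finrank_fin_fun] at h1
    have h2 : Module.finrank ℝ (LinearMap.range M.mulVecLin) = n := hrank
    omega
  have hspan : Submodule.span ℝ (Set.range e) = LinearMap.ker M.mulVecLin :=
    Submodule.eq_of_le_of_finrank_le hle
      (by rw [hker, finrank_span_eq_card hli, Fintype.card_fin])
  exact ⟨hrank, hli, hspan, hMe⟩
end
end
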